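/- arXiv:1806.03428 — 4 statements merged into one kernel-verified Lean document; each statement's English description precedes it below -/
import Mathlib

section
/- Assume the two-sided Gaussian bounds, the ball-positivity assumption and the volume-ratio bounds. Then for every 1 ≤ p < ∞ and every 0 ≤ α < ∞ there exist constants c, C > 0 such that every u ∈ L^p(X,μ) satisfies c · sup_{t>0} ( ∫_X ∫_{B(x,t)} |u(y) − u(x)|^p / (t^{αp} μ(B(x,t))) dμ(y) dμ(x) )^{1/p} ≤ ‖u‖_{p,α/2} ≤ C · sup_{t>0} ( ∫_X ∫_{B(x,t)} |u(y) − u(x)|^p / (t^{αp} μ(B(x,t))) dμ(y) dμ(x) )^{1/p}; in particular B^{p,α/2}(X) coincides with the metric Besov space B^{α}_{p,∞}(X) = { u ∈ L^p(X,μ) : sup_{t>0} ( ∫_X ∫_{B(x,t)} |u(y) − u(x)|^p / (t^{αp} μ(B(x,t))) dμ(y) dμ(x) )^{1/p} < ∞ }, with comparable seminorms. -/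
open MeasureTheory ENNReal Metric Filter

noncomputable section

namespace BesovDirichlet

variable {X : Type*} [MeasurableSpace X]

/-- A heat kernel on a measure space: jointly measurable, nonnegative, symmetric,
satisfying the semigroup property and conservative. -/
structure IsHeatKernel (μ : Measure X) (K : ℝ → X → X → ℝ) : Prop where
  measurable : ∀ t : ℝ, Measurable fun xy : X × X => K t xy.1 xy.2
  nonneg : ∀ (t : ℝ) (x y : X), 0 ≤ K t x y
  symm : ∀ (t : ℝ) (x y : X), K t x y = K t y x
  semigroup : ∀ s t : ℝ, 0 < s → 0 < t →
    ∀ᵐ xy ∂(μ.prod μ), (∫ z, K t xy.1 z * K s z xy.2 ∂μ) = K (t + s) xy.1 xy.2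
  conservative : ∀ t : ℝ, 0 < t → ∀ᵐ x ∂μ, (∫ y, K t x y ∂μ) = 1

/-- The heat semigroup `P_t f (x) = ∫ p_t(x,y) f(y) dμ(y)`. -/
def heatOp (μ : Measure X) (K : ℝ → X → X → ℝ) (t : ℝ) (f : X → ℝ) (x : X) : ℝ :=
  ∫ y, K t x y * f y ∂μ

/-- The double integral `∫∫ |f(x) − f(y)|^p p_t(x,y) dμ(x) dμ(y)` as an extended real. -/
def besovEnergy (μ : Measure X) (K : ℝ → X → X → ℝ) (p t : ℝ) (f : X → ℝ) : ℝ≥0∞ :=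
  ∫⁻ x, (∫⁻ y, ENNReal.ofReal (|f x - f y| ^ p) * ENNReal.ofReal (K t x y) ∂μ) ∂μ

/-- The heat-semigroup Besov seminorm `‖f‖_{p,α}`. -/
def besovSeminorm (μ : Measure X) (K : ℝ → X → X → ℝ) (p α : ℝ) (f : X → ℝ) : ℝ≥0∞ :=
  ⨆ (t : ℝ) (_ : 0 < t), ENNReal.ofReal (t ^ (-α)) * besovEnergy μ K p t f ^ (1 / p)

/-- Membership in the Besov space `B^{p,α}(X)`. -/
def MemBesov (μ : Measure X) (K : ℝ → X → X → ℝ) (p α : ℝ) (f : X → ℝ) : Prop :=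
  MemLp f (ENNReal.ofReal p) μ ∧ besovSeminorm μ K p α f ≠ ∞

/-- The metric Besov quantity
`sup_{t>0} (∫_X ∫_{B(x,t)} |u(y)−u(x)|^p / (t^{αp} μ(B(x,t))) dμ(y) dμ(x))^{1/p}`. -/
def metricBesovQ [PseudoMetricSpace X] (μ : Measure X) (p α : ℝ) (u : X → ℝ) : ℝ≥0∞ :=
  ⨆ (t : ℝ) (_ : 0 < t),
    (∫⁻ x, (∫⁻ y in Metric.ball x t,
        ENNReal.ofReal (|u y - u x| ^ p) /
          (ENNReal.ofReal (t ^ (α * p)) * μ (Metric.ball x t)) ∂μ) ∂μ) ^ (1 / p)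


section Aux

lemma summable_aux {k β : ℝ} (hk : 0 < k) :
    Summable (fun j : ℕ => Real.exp (-k * (j:ℝ)^2) * ((j:ℝ)+1) ^ β) := by
  set ρ : ℝ := Real.exp (-k) with hρ
  have hρ0 : 0 < ρ := Real.exp_pos _
  have hρ1 : ρ < 1 := Real.exp_lt_one_iff.mpr (by linarith)
  set m : ℕ := ⌈β⌉₊
  have hsum : Summable (fun j : ℕ => ((j:ℝ))^m * ρ^j) :=
    summable_pow_mul_geometric_of_norm_lt_one m (by rw [Real.norm_eq_abs, abs_of_pos hρ0]; exact hρ1)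
  have hsum2 : Summable (fun j : ℕ => (((j:ℕ)+1:ℝ))^m * ρ^(j+1)) := by
    have := (summable_nat_add_iff 1).mpr hsum
    simpa using this
  have hsum3 : Summable (fun j : ℕ => (((j:ℝ)+1))^m * ρ^j) := by
    have := hsum2.mul_left ρ⁻¹
    refine this.congr fun j => ?_
    field_simp
    ring
  refine Summable.of_nonneg_of_le (fun j => by positivity) (fun j => ?_) hsum3
  have h1 : Real.exp (-k * (j:ℝ)^2) ≤ ρ^j := by
    rw [hρ, ← Real.exp_nat_mul]
    apply Real.exp_le_exp.mpr
    have : (j:ℝ) ≤ (j:ℝ)^2 := by exact_mod_cast Nat.le_self_pow two_ne_zero j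
    nlinarith [this, hk]
  have h2 : ((j:ℝ)+1) ^ β ≤ ((j:ℝ)+1)^m := by
    rw [← Real.rpow_natCast ((j:ℝ)+1) m]
    exact Real.rpow_le_rpow_of_exponent_le (by linarith [Nat.cast_nonneg (α := ℝ) j]) (Nat.le_ceil β)
  have h3 : (0:ℝ) ≤ ((j:ℝ)+1)^β := Real.rpow_nonneg (by positivity) _
  calc Real.exp (-k * (j:ℝ)^2) * ((j:ℝ)+1) ^ β ≤ ρ^j * ((j:ℝ)+1)^m := by
        apply mul_le_mul h1 h2 h3 (by positivity)
    _ = ((j:ℝ)+1)^m * ρ^j := by ring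

variable {X : Type*} [MeasurableSpace X]

lemma besovEnergy_congr {μ : Measure X} {K : ℝ → X → X → ℝ} {p t : ℝ} {u v : X → ℝ}
    (h : u =ᵐ[μ] v) : besovEnergy μ K p t u = besovEnergy μ K p t v := by
  refine lintegral_congr_ae ?_
  filter_upwards [h] with x hx
  refine lintegral_congr_ae ?_
  filter_upwards [h] with y hy
  rw [hx, hy]

lemma besovSeminorm_congr {μ : Measure X} {K : ℝ → X → X → ℝ} {p α : ℝ} {u v : X → ℝ}
    (h : u =ᵐ[μ] v) : besovSeminorm μ K p α u = besovSeminorm μ K p α v := by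
  unfold besovSeminorm
  exact iSup_congr fun t => iSup_congr fun _ => by rw [besovEnergy_congr h]

lemma metricBesovQ_congr [PseudoMetricSpace X] {μ : Measure X} {p α : ℝ} {u v : X → ℝ}
    (h : u =ᵐ[μ] v) : metricBesovQ μ p α u = metricBesovQ μ p α v := by
  unfold metricBesovQ
  refine iSup_congr fun t => iSup_congr fun _ => ?_
  congr 1
  refine lintegral_congr_ae ?_
  filter_upwards [h] with x hx
  refine lintegral_congr_ae ?_
  filter_upwards [ae_restrict_of_ae h] with y hy
  rw [hx, hy]

end Aux

section Main

variable {X : Type*} [MetricSpace X] [MeasurableSpace X] [BorelSpace X]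


omit [BorelSpace X] in
lemma iter_rewrite (μ : Measure X)
    (u : X → ℝ) (p : ℝ) {c : ℝ≥0∞} (hc0 : c ≠ 0) (hcT : c ≠ ∞) {R : ℝ}
    (hμB0 : ∀ x : X, μ (Metric.ball x R) ≠ 0) :
    (∫⁻ x, ∫⁻ y in Metric.ball x R, ENNReal.ofReal (|u y - u x| ^ p) /
        (c * μ (Metric.ball x R)) ∂μ ∂μ)
      = c⁻¹ * ∫⁻ x, (∫⁻ y in Metric.ball x R, ENNReal.ofReal (|u x - u y| ^ p) ∂μ) /
          μ (Metric.ball x R) ∂μ := by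
  rw [← lintegral_const_mul' _ _ (ENNReal.inv_ne_top.mpr hc0)]
  refine lintegral_congr fun x => ?_
  calc (∫⁻ y in Metric.ball x R, ENNReal.ofReal (|u y - u x| ^ p) /
        (c * μ (Metric.ball x R)) ∂μ)
      = ∫⁻ y in Metric.ball x R, ENNReal.ofReal (|u x - u y| ^ p) *
          (c * μ (Metric.ball x R))⁻¹ ∂μ := by
        refine lintegral_congr fun y => ?_
        rw [abs_sub_comm, div_eq_mul_inv]
    _ = (∫⁻ y in Metric.ball x R, ENNReal.ofReal (|u x - u y| ^ p) ∂μ) *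
          (c * μ (Metric.ball x R))⁻¹ :=
        lintegral_mul_const' _ _ (ENNReal.inv_ne_top.mpr (mul_ne_zero hc0 (hμB0 x)))
    _ = c⁻¹ * ((∫⁻ y in Metric.ball x R, ENNReal.ofReal (|u x - u y| ^ p) ∂μ) /
          μ (Metric.ball x R)) := by
        rw [ENNReal.mul_inv (Or.inl hc0) (Or.inl hcT), div_eq_mul_inv]
        ring

lemma lower_estimate
    (μ : Measure X) [SigmaFinite μ] (K : ℝ → X → X → ℝ)
    (C₁ k₁ : ℝ) (hC₁ : 1 ≤ C₁) (hk₁ : 0 < k₁)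
    (hGaussL : ∀ t : ℝ, 0 < t → ∀ᵐ xy ∂(μ.prod μ),
      (1 / C₁) * Real.exp (-k₁ * dist xy.1 xy.2 ^ 2 / t) /
          Real.sqrt ((μ (Metric.ball xy.1 (Real.sqrt t))).toReal *
            (μ (Metric.ball xy.2 (Real.sqrt t))).toReal) ≤ K t xy.1 xy.2)
    (hpos : ∀ (x : X) (r : ℝ), 0 < r → 0 < μ (Metric.ball x r) ∧ μ (Metric.ball x r) < ∞)
    (Q C₂ : ℝ) (hC₂ : 1 ≤ C₂)
    (hvolU : ∀ (x y : X) (r R : ℝ), 0 < r → r ≤ R → y ∈ Metric.ball x R →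
      (μ (Metric.ball y r)).toReal / (μ (Metric.ball x R)).toReal ≤ C₂ * (r / R) ^ Q)
    (p α : ℝ) (hp : 1 ≤ p) (hα : 0 ≤ α) (u : X → ℝ) :
    ENNReal.ofReal (((1/C₁) * Real.exp (-k₁) / Real.sqrt C₂) ^ (1/p)) * metricBesovQ μ p α u ≤
      besovSeminorm μ K p (α/2) u := by
  have hC₁0 : (0:ℝ) < C₁ := lt_of_lt_of_le one_pos hC₁
  have hC₂0 : (0:ℝ) < C₂ := lt_of_lt_of_le one_pos hC₂
  set c₀ : ℝ := (1/C₁) * Real.exp (-k₁) / Real.sqrt C₂ with hc₀def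
  have hc₀ : 0 < c₀ := by
    have : 0 < Real.sqrt C₂ := Real.sqrt_pos.mpr hC₂0
    positivity
  have hp' : (0:ℝ) < p := lt_of_lt_of_le one_pos hp
  rw [metricBesovQ, ENNReal.mul_iSup]
  refine iSup_le fun r => ?_
  rw [ENNReal.mul_iSup]
  refine iSup_le fun hr => ?_
  set t : ℝ := r^2 with htdef
  have ht : 0 < t := by positivity
  have hrt : Real.sqrt t = r := Real.sqrt_sq hr.le
  -- abbreviations
  set D : X → ℝ≥0∞ := fun x => ∫⁻ y in Metric.ball x r, ENNReal.ofReal (|u x - u y| ^ p) ∂μ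
    with hD
  set J : ℝ≥0∞ := ∫⁻ x, D x / μ (Metric.ball x r) ∂μ with hJ
  have hμB0 : ∀ x : X, μ (Metric.ball x r) ≠ 0 := fun x => (hpos x r hr).1.ne'
  have hμBT : ∀ x : X, μ (Metric.ball x r) ≠ ∞ := fun x => (hpos x r hr).2.ne
  have hcR0 : (0:ℝ) < r ^ (α * p) := Real.rpow_pos_of_pos hr _
  -- Step B : energy lower bound
  have stepB : ENNReal.ofReal c₀ * J ≤ besovEnergy μ K p t u := by
    rw [hJ, ← lintegral_const_mul' _ _ ENNReal.ofReal_ne_top]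
    rw [besovEnergy]
    refine lintegral_mono_ae ?_
    filter_upwards [Measure.ae_ae_of_ae_prod (hGaussL t ht)] with x hx
    have key : ∫⁻ y in Metric.ball x r,
        ENNReal.ofReal (|u x - u y| ^ p) * (ENNReal.ofReal c₀ / μ (Metric.ball x r)) ∂μ ≤
        ∫⁻ y, ENNReal.ofReal (|u x - u y| ^ p) * ENNReal.ofReal (K t x y) ∂μ := by
      refine le_trans ?_ (setLIntegral_le_lintegral (Metric.ball x r) _)
      refine lintegral_mono_ae ?_
      filter_upwards [ae_restrict_of_ae hx, ae_restrict_mem measurableSet_ball] with y hy hymem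
      refine mul_le_mul_right ?_ _
      -- kernel pointwise lower bound on the ball
      set Vx : ℝ := (μ (Metric.ball x r)).toReal with hVx
      set Vy : ℝ := (μ (Metric.ball y r)).toReal with hVy
      have hVx0 : 0 < Vx := ENNReal.toReal_pos (hμB0 x) (hμBT x)
      have hVy0 : 0 < Vy := ENNReal.toReal_pos (hμB0 y) (hμBT y)
      have hVyle : Vy ≤ C₂ * Vx := by
        have h2 := hvolU x y r r hr le_rfl hymem
        rw [div_self hr.ne', Real.one_rpow, mul_one] at h2
        calc Vy = Vy / Vx * Vx := by field_simp
          _ ≤ C₂ * Vx := mul_le_mul_of_nonneg_right h2 hVx0.le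
      have hsqrtle : Real.sqrt (Vx * Vy) ≤ Real.sqrt C₂ * Vx := by
        have h1 : Vx * Vy ≤ C₂ * Vx^2 := by nlinarith
        calc Real.sqrt (Vx * Vy) ≤ Real.sqrt (C₂ * Vx^2) := Real.sqrt_le_sqrt h1
          _ = Real.sqrt C₂ * Vx := by
              rw [Real.sqrt_mul hC₂0.le, Real.sqrt_sq hVx0.le]
      have hexp : Real.exp (-k₁) ≤ Real.exp (-k₁ * dist x y ^ 2 / t) := by
        apply Real.exp_le_exp.mpr
        have hd : dist x y ^ 2 ≤ t := by
          have : dist x y < r := by rw [dist_comm]; exact mem_ball.mp hymem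
          nlinarith [dist_nonneg (x := x) (y := y)]
        rw [le_div_iff₀ ht]
        nlinarith [hk₁, hd, ht]
      have hKlow : c₀ / Vx ≤ K t x y := by
        have h0 := hy
        rw [hrt] at h0
        refine le_trans ?_ h0
        rw [hc₀def, div_div]
        have hnum : 0 ≤ (1/C₁) * Real.exp (-k₁ * dist x y ^ 2 / t) := by positivity
        apply div_le_div₀ hnum ?_ (Real.sqrt_pos.mpr (by positivity)) hsqrtle
        exact mul_le_mul_of_nonneg_left hexp (by positivity)
      calc ENNReal.ofReal c₀ / μ (Metric.ball x r)
          = ENNReal.ofReal (c₀ / Vx) := by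
            rw [ENNReal.ofReal_div_of_pos hVx0, hVx, ENNReal.ofReal_toReal (hμBT x)]
        _ ≤ ENNReal.ofReal (K t x y) := ENNReal.ofReal_le_ofReal hKlow
    refine le_trans (le_of_eq ?_) key
    have hconst : ENNReal.ofReal c₀ / μ (Metric.ball x r) ≠ ∞ :=
      (ENNReal.div_lt_top ENNReal.ofReal_ne_top (hμB0 x)).ne
    rw [lintegral_mul_const' _ _ hconst, hD]
    rw [ENNReal.div_eq_inv_mul, ENNReal.div_eq_inv_mul]
    ring
  -- Step A : rewrite the metric inner integral
  have hcRne : ENNReal.ofReal (r ^ (α * p)) ≠ 0 := (ENNReal.ofReal_pos.mpr hcR0).ne'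
  have hiter : (∫⁻ x, ∫⁻ y in Metric.ball x r, ENNReal.ofReal (|u y - u x| ^ p) /
        (ENNReal.ofReal (r ^ (α * p)) * μ (Metric.ball x r)) ∂μ ∂μ)
      = (ENNReal.ofReal (r ^ (α * p)))⁻¹ * J :=
    iter_rewrite μ u p hcRne ENNReal.ofReal_ne_top hμB0
  rw [hiter]
  -- Step C : combine
  have hexpid : (ENNReal.ofReal (r ^ (α * p)))⁻¹ ^ (1/p) = ENNReal.ofReal (t ^ (-(α/2))) := by
    rw [ENNReal.inv_rpow, ENNReal.ofReal_rpow_of_pos hcR0, ← Real.rpow_mul hr.le]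
    have h1 : α * p * (1/p) = α := by field_simp
    rw [h1, ← ENNReal.ofReal_inv_of_pos (Real.rpow_pos_of_pos hr α), ← Real.rpow_neg hr.le]
    congr 1
    rw [htdef, ← Real.rpow_natCast r 2, ← Real.rpow_mul hr.le]
    congr 1
    push_cast
    ring
  calc ENNReal.ofReal (c₀ ^ (1/p)) * ((ENNReal.ofReal (r ^ (α * p)))⁻¹ * J) ^ (1/p)
      = ENNReal.ofReal (t ^ (-(α/2))) * (ENNReal.ofReal c₀ * J) ^ (1/p) := by
        rw [ENNReal.mul_rpow_of_nonneg _ _ (by positivity : (0:ℝ) ≤ 1/p), hexpid,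
          ENNReal.mul_rpow_of_nonneg _ _ (by positivity : (0:ℝ) ≤ 1/p),
          ENNReal.ofReal_rpow_of_pos hc₀]
        ring
    _ ≤ ENNReal.ofReal (t ^ (-(α/2))) * besovEnergy μ K p t u ^ (1/p) := by
        refine mul_le_mul_right (ENNReal.rpow_le_rpow stepB (by positivity)) _
    _ ≤ besovSeminorm μ K p (α/2) u := by
        refine le_iSup₂_of_le t ht ?_
        exact le_refl _


lemma totallyBounded_ball_of_vol
    (μ : Measure X)
    (hpos : ∀ (x : X) (r : ℝ), 0 < r → 0 < μ (Metric.ball x r) ∧ μ (Metric.ball x r) < ∞)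
    (S C₂ : ℝ) (hC₂ : 1 ≤ C₂)
    (hvolL : ∀ (x y : X) (r R : ℝ), 0 < r → r ≤ R → y ∈ Metric.ball x R →
      (1 / C₂) * (r / R) ^ S ≤ (μ (Metric.ball y r)).toReal / (μ (Metric.ball x R)).toReal)
    (x₀ : X) (R : ℝ) (hR : 0 < R) : TotallyBounded (Metric.ball x₀ R) := by
  classical
  have hC₂0 : (0:ℝ) < C₂ := lt_of_lt_of_le one_pos hC₂
  rw [Metric.totallyBounded_iff]
  by_contra h
  push_neg at h
  obtain ⟨ε, hε, h⟩ := h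
  have key : ∀ t : Finset X, ∃ z, z ∈ Metric.ball x₀ R ∧ ∀ y ∈ t, ε ≤ dist z y := by
    intro t
    obtain ⟨z, hz1, hz2⟩ := Set.not_subset.mp (h ↑t t.finite_toSet)
    refine ⟨z, hz1, fun y hy => ?_⟩
    by_contra hd
    push_neg at hd
    exact hz2 (Set.mem_biUnion (Finset.mem_coe.mpr hy) (Metric.mem_ball.mpr hd))
  choose z hz1 hz2 using key
  set v : ℕ → Finset X := fun n => Nat.rec ∅ (fun _ vn => insert (z vn) vn) n with hvdef
  have hv : ∀ n, v (n+1) = insert (z (v n)) (v n) := fun n => rfl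
  set w : ℕ → X := fun n => z (v n) with hwdef
  have hmono : ∀ m n, m ≤ n → v m ⊆ v n := by
    intro m n hmn
    induction n, hmn using Nat.le_induction with
    | base => exact Finset.Subset.refl _
    | succ n hmn ih =>
        refine ih.trans ?_
        rw [hv]
        exact Finset.subset_insert _ _
  have hwmem : ∀ m n, m < n → w m ∈ v n := by
    intro m n hmn
    have h1 : w m ∈ v (m+1) := by rw [hv]; exact Finset.mem_insert_self _ _
    exact hmono (m+1) n hmn h1
  have hsep : ∀ m n, m < n → ε ≤ dist (w n) (w m) := fun m n hmn =>
    hz2 (v n) (w m) (hwmem m n hmn)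
  have hdisj : Pairwise (Function.onFun Disjoint fun n => Metric.ball (w n) (ε/2)) := by
    intro m n hmn
    rcases hmn.lt_or_gt with h1 | h1
    · refine Metric.ball_disjoint_ball ?_
      have := hsep m n h1
      rw [dist_comm] at this
      linarith
    · refine Metric.ball_disjoint_ball ?_
      have := hsep n m h1
      linarith
  have hsub : ∀ n, Metric.ball (w n) (ε/2) ⊆ Metric.ball x₀ (R+ε) := by
    intro n y hy
    have h1 : dist y (w n) < ε/2 := Metric.mem_ball.mp hy
    have h2 : dist (w n) x₀ < R := Metric.mem_ball.mp (hz1 (v n))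
    have := dist_triangle y (w n) x₀
    exact Metric.mem_ball.mpr (by linarith)
  have hb0 : 0 < (μ (Metric.ball x₀ (R+ε))).toReal :=
    ENNReal.toReal_pos (hpos x₀ (R+ε) (by linarith)).1.ne' (hpos x₀ (R+ε) (by linarith)).2.ne
  set δ : ℝ := (1 / C₂) * ((ε/2) / (R+ε)) ^ S * (μ (Metric.ball x₀ (R+ε))).toReal with hδdef
  have hδ : 0 < δ := by
    have h1 : (0:ℝ) < ((ε/2) / (R+ε)) ^ S := Real.rpow_pos_of_pos (by positivity) _
    positivity
  have hlow : ∀ n, ENNReal.ofReal δ ≤ μ (Metric.ball (w n) (ε/2)) := by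
    intro n
    have hmem : w n ∈ Metric.ball x₀ (R+ε) :=
      Metric.ball_subset_ball (by linarith) (hz1 (v n))
    have h1 := hvolL x₀ (w n) (ε/2) (R+ε) (by positivity) (by linarith) hmem
    have h2 : δ ≤ (μ (Metric.ball (w n) (ε/2))).toReal := by
      calc δ = ((1/C₂) * ((ε/2)/(R+ε))^S) * (μ (Metric.ball x₀ (R+ε))).toReal := by
            rw [hδdef]
        _ ≤ ((μ (Metric.ball (w n) (ε/2))).toReal / (μ (Metric.ball x₀ (R+ε))).toReal) *
            (μ (Metric.ball x₀ (R+ε))).toReal := mul_le_mul_of_nonneg_right h1 hb0.le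
        _ = (μ (Metric.ball (w n) (ε/2))).toReal := div_mul_cancel₀ _ hb0.ne'
    exact ENNReal.ofReal_le_of_le_toReal h2
  have hcontra : (∑' _ : ℕ, ENNReal.ofReal δ) ≤ μ (Metric.ball x₀ (R+ε)) := by
    calc (∑' _ : ℕ, ENNReal.ofReal δ) ≤ ∑' n, μ (Metric.ball (w n) (ε/2)) :=
          ENNReal.tsum_le_tsum hlow
      _ = μ (⋃ n, Metric.ball (w n) (ε/2)) :=
          (measure_iUnion hdisj (fun n => measurableSet_ball)).symm
      _ ≤ μ (Metric.ball x₀ (R+ε)) := measure_mono (Set.iUnion_subset hsub)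
  rw [ENNReal.tsum_const_eq_top_of_ne_zero (ENNReal.ofReal_pos.mpr hδ).ne'] at hcontra
  exact absurd (top_le_iff.mp hcontra) (hpos x₀ (R+ε) (by linarith)).2.ne

lemma secondCountable_of_vol
    (μ : Measure X)
    (hpos : ∀ (x : X) (r : ℝ), 0 < r → 0 < μ (Metric.ball x r) ∧ μ (Metric.ball x r) < ∞)
    (S C₂ : ℝ) (hC₂ : 1 ≤ C₂)
    (hvolL : ∀ (x y : X) (r R : ℝ), 0 < r → r ≤ R → y ∈ Metric.ball x R →
      (1 / C₂) * (r / R) ^ S ≤ (μ (Metric.ball y r)).toReal / (μ (Metric.ball x R)).toReal) :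
    SecondCountableTopology X := by
  have hsep : TopologicalSpace.SeparableSpace X := by
    rcases isEmpty_or_nonempty X with hX | hX
    · infer_instance
    · obtain ⟨x₀⟩ := hX
      have huniv : (Set.univ : Set X) = ⋃ n : ℕ, Metric.ball x₀ ((n:ℝ)+1) := by
        ext y
        simp only [Set.mem_univ, Set.mem_iUnion, Metric.mem_ball, true_iff]
        exact ⟨⌊dist y x₀⌋₊, Nat.lt_floor_add_one _⟩
      have : TopologicalSpace.IsSeparable (Set.univ : Set X) := by
        rw [huniv]
        exact TopologicalSpace.IsSeparable.iUnion fun n =>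
          (totallyBounded_ball_of_vol μ hpos S C₂ hC₂ hvolL x₀ _ (by positivity)).isSeparable
      exact TopologicalSpace.isSeparable_univ_iff.mp this
  exact UniformSpace.secondCountable_of_separable X

set_option maxHeartbeats 2000000 in
lemma upper_estimate
    (μ : Measure X) [SigmaFinite μ] (K : ℝ → X → X → ℝ)
    (hKm : ∀ t : ℝ, Measurable fun xy : X × X => K t xy.1 xy.2)
    (C₁ k₂ : ℝ) (hC₁ : 1 ≤ C₁) (hk₂ : 0 < k₂)
    (hGaussU : ∀ t : ℝ, 0 < t → ∀ᵐ xy ∂(μ.prod μ),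
      K t xy.1 xy.2 ≤ C₁ * Real.exp (-k₂ * dist xy.1 xy.2 ^ 2 / t) /
          Real.sqrt ((μ (Metric.ball xy.1 (Real.sqrt t))).toReal *
            (μ (Metric.ball xy.2 (Real.sqrt t))).toReal))
    (hpos : ∀ (x : X) (r : ℝ), 0 < r → 0 < μ (Metric.ball x r) ∧ μ (Metric.ball x r) < ∞)
    (S C₂ : ℝ) (hC₂ : 1 ≤ C₂)
    (hvolL : ∀ (x y : X) (r R : ℝ), 0 < r → r ≤ R → y ∈ Metric.ball x R →
      (1 / C₂) * (r / R) ^ S ≤ (μ (Metric.ball y r)).toReal / (μ (Metric.ball x R)).toReal)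
    (p α : ℝ) (hp : 1 ≤ p) (hα : 0 ≤ α) (u : X → ℝ) (hu : Measurable u) :
    besovSeminorm μ K p (α/2) u ≤
      ENNReal.ofReal ((∑' j : ℕ, C₁ * C₂ * Real.exp (-k₂ * (j:ℝ)^2) *
        ((j:ℝ)+1) ^ (S + α*p)) ^ (1/p)) * metricBesovQ μ p α u := by
  have hC₁0 : (0:ℝ) < C₁ := lt_of_lt_of_le one_pos hC₁
  have hC₂0 : (0:ℝ) < C₂ := lt_of_lt_of_le one_pos hC₂
  have hp' : (0:ℝ) < p := lt_of_lt_of_le one_pos hp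
  have hp0 : p ≠ 0 := hp'.ne'
  set M : ℝ≥0∞ := metricBesovQ μ p α u with hM
  set g : ℕ → ℝ := fun j => C₁ * C₂ * Real.exp (-k₂ * (j:ℝ)^2) * ((j:ℝ)+1) ^ (S + α*p)
    with hg
  have hg0 : ∀ j, 0 ≤ g j := fun j => by
    have : (0:ℝ) < ((j:ℝ)+1) ^ (S + α*p) :=
      Real.rpow_pos_of_pos (by positivity) _
    positivity
  have hgsum : Summable g := by
    have := (summable_aux (β := S + α*p) hk₂).mul_left (C₁ * C₂)
    refine this.congr fun j => ?_
    rw [hg]; ring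
  set Csum : ℝ := ∑' j : ℕ, g j with hCsum
  have hCsum0 : 0 < Csum := by
    refine Summable.tsum_pos hgsum hg0 0 ?_
    have : (0:ℝ) < ((0:ℝ)+1) ^ (S + α*p) := Real.rpow_pos_of_pos (by norm_num) _
    have h2 : (0:ℝ) < Real.exp (-k₂ * ((0:ℕ):ℝ)^2) := Real.exp_pos _
    simp only [hg, Nat.cast_zero]
    positivity
  haveI : SecondCountableTopology X := secondCountable_of_vol μ hpos S C₂ hC₂ hvolL
  rw [besovSeminorm]
  refine iSup₂_le fun t ht => ?_
  set r : ℝ := Real.sqrt t with hrdef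
  have hr : 0 < r := Real.sqrt_pos.mpr ht
  have hr2 : r^2 = t := Real.sq_sqrt ht.le
  have hrapos : (0:ℝ) < r ^ (α * p) := Real.rpow_pos_of_pos hr _
  -- radii
  set Rj : ℕ → ℝ := fun j => ((j:ℝ)+1) * r with hRj
  have hRjpos : ∀ j, 0 < Rj j := fun j => by
    have : (0:ℝ) < (j:ℝ)+1 := by positivity
    simp only [hRj]; positivity
  have hμB0 : ∀ (j : ℕ) (x : X), μ (Metric.ball x (Rj j)) ≠ 0 :=
    fun j x => (hpos x _ (hRjpos j)).1.ne'
  have hμBT : ∀ (j : ℕ) (x : X), μ (Metric.ball x (Rj j)) ≠ ∞ :=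
    fun j x => (hpos x _ (hRjpos j)).2.ne
  -- Step 1 : metric Besov control of the averaged oscillation at each radius
  have step1 : ∀ j : ℕ,
      (∫⁻ x, (∫⁻ y in Metric.ball x (Rj j), ENNReal.ofReal (|u x - u y| ^ p) ∂μ) /
        μ (Metric.ball x (Rj j)) ∂μ) ≤ ENNReal.ofReal ((Rj j) ^ (α * p)) * M ^ p := by
    intro j
    have hcne : ENNReal.ofReal ((Rj j) ^ (α * p)) ≠ 0 :=
      (ENNReal.ofReal_pos.mpr (Real.rpow_pos_of_pos (hRjpos j) _)).ne'
    have hterm : (∫⁻ x, ∫⁻ y in Metric.ball x (Rj j), ENNReal.ofReal (|u y - u x| ^ p) /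
        (ENNReal.ofReal ((Rj j) ^ (α * p)) * μ (Metric.ball x (Rj j))) ∂μ ∂μ) ^ (1/p) ≤ M := by
      rw [hM, metricBesovQ]
      exact le_iSup₂_of_le (Rj j) (hRjpos j) (le_refl _)
    have h2 := ENNReal.rpow_le_rpow hterm hp'.le
    rw [← ENNReal.rpow_mul, one_div, inv_mul_cancel₀ hp0, ENNReal.rpow_one,
      iter_rewrite μ u p hcne ENNReal.ofReal_ne_top (hμB0 j)] at h2
    have h3 := mul_le_mul_right h2 (ENNReal.ofReal ((Rj j) ^ (α * p)))
    rwa [← mul_assoc, ENNReal.mul_inv_cancel hcne ENNReal.ofReal_ne_top, one_mul] at h3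
  -- measurability of ball volumes
  have hballmeas : ∀ R : ℝ, Measurable fun x : X => μ (Metric.ball x R) := by
    intro R
    have hs : MeasurableSet {w : X × X | dist w.1 w.2 < R} :=
      (isOpen_lt continuous_dist continuous_const).measurableSet
    have h1 : ∀ x : X, Metric.ball x R = Prod.mk x ⁻¹' {w : X × X | dist w.1 w.2 < R} := by
      intro x; ext y; simp [Metric.mem_ball, dist_comm]
    simp_rw [h1]
    exact measurable_measure_prodMk_left hs
  -- the dominating functions
  set H : ℕ → X × X → ℝ≥0∞ := fun j z =>
    ENNReal.ofReal (C₁ * C₂ * Real.exp (-k₂ * (j:ℝ)^2) * ((j:ℝ)+1) ^ S) *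
      ({w : X × X | dist w.1 w.2 < Rj j}).indicator
        (fun w => ENNReal.ofReal (|u w.1 - u w.2| ^ p) / μ (Metric.ball w.1 (Rj j))) z
    with hH
  have hSmeas : ∀ j : ℕ, MeasurableSet {w : X × X | dist w.1 w.2 < Rj j} := fun j =>
    (isOpen_lt continuous_dist continuous_const).measurableSet
  have hAmeas : Measurable fun z : X × X => ENNReal.ofReal (|u z.1 - u z.2| ^ p) :=
    ((((hu.comp measurable_fst).sub (hu.comp measurable_snd)).abs.pow
      measurable_const)).ennreal_ofReal
  have hHmeas : ∀ j, Measurable (H j) := by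
    intro j
    exact measurable_const.mul ((hAmeas.div
      ((hballmeas (Rj j)).comp measurable_fst)).indicator (hSmeas j))
  -- the kernel integrand
  set F : X × X → ℝ≥0∞ := fun z =>
    ENNReal.ofReal (|u z.1 - u z.2| ^ p) * ENNReal.ofReal (K t z.1 z.2) with hF
  have hFmeas : Measurable F := hAmeas.mul (hKm t).ennreal_ofReal
  -- pointwise domination
  have hFH : ∀ᵐ z ∂(μ.prod μ), F z ≤ ∑' j, H j z := by
    filter_upwards [hGaussU t ht] with z hz
    rw [← hrdef] at hz
    obtain ⟨x, y⟩ := z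
    simp only at hz
    set d := dist x y with hddef
    have hd0 : 0 ≤ d := dist_nonneg
    set j := ⌊d / r⌋₊ with hjdef
    have hjd : (j:ℝ) * r ≤ d := by
      have h1 := Nat.floor_le (div_nonneg hd0 hr.le)
      calc (j:ℝ) * r ≤ (d/r) * r := mul_le_mul_of_nonneg_right h1 hr.le
        _ = d := div_mul_cancel₀ _ hr.ne'
    have hdj : d < Rj j := by
      have h1 : d / r < (j:ℝ) + 1 := Nat.lt_floor_add_one (d / r)
      have h2 : d = (d/r) * r := (div_mul_cancel₀ _ hr.ne').symm
      simp only [hRj]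
      nlinarith
    refine le_trans ?_ (ENNReal.le_tsum j)
    have hzS : ((x, y) : X × X) ∈ {w : X × X | dist w.1 w.2 < Rj j} := by
      simpa [← hddef] using hdj
    simp only [hH]
    rw [Set.indicator_of_mem hzS]
    set W : ℝ := (μ (Metric.ball x (Rj j))).toReal with hWdef
    have hW0 : 0 < W := ENNReal.toReal_pos (hμB0 j x) (hμBT j x)
    have hrR : r ≤ Rj j := by
      simp only [hRj]
      nlinarith [Nat.cast_nonneg (α := ℝ) j]
    set Vx : ℝ := (μ (Metric.ball x r)).toReal with hVxdef
    set Vy : ℝ := (μ (Metric.ball y r)).toReal with hVydef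
    set a : ℝ := (1/C₂) * (r / Rj j) ^ S with hadef
    have hrRj0 : 0 < r / Rj j := div_pos hr (hRjpos j)
    have ha0 : 0 < a := by
      have := Real.rpow_pos_of_pos hrRj0 S
      positivity
    have hVx : a * W ≤ Vx := by
      have h1 := hvolL x x r (Rj j) hr hrR (Metric.mem_ball_self (hRjpos j))
      calc a * W ≤ (Vx / W) * W := mul_le_mul_of_nonneg_right h1 hW0.le
        _ = Vx := div_mul_cancel₀ _ hW0.ne'
    have hVy : a * W ≤ Vy := by
      have hymem : y ∈ Metric.ball x (Rj j) := by
        rw [Metric.mem_ball, dist_comm, ← hddef]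
        exact hdj
      have h1 := hvolL x y r (Rj j) hr hrR hymem
      calc a * W ≤ (Vy / W) * W := mul_le_mul_of_nonneg_right h1 hW0.le
        _ = Vy := div_mul_cancel₀ _ hW0.ne'
    have hsq : a * W ≤ Real.sqrt (Vx * Vy) := by
      have h1 : (a*W) * (a*W) ≤ Vx * Vy :=
        mul_le_mul hVx hVy (by positivity) (le_trans (by positivity) hVx)
      calc a * W = Real.sqrt ((a*W)^2) := (Real.sqrt_sq (by positivity)).symm
        _ ≤ Real.sqrt (Vx * Vy) := Real.sqrt_le_sqrt (by nlinarith)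
    have hexp : Real.exp (-k₂ * d^2 / t) ≤ Real.exp (-k₂*(j:ℝ)^2) := by
      apply Real.exp_le_exp.mpr
      rw [div_le_iff₀ ht]
      have hd2 : ((j:ℝ))^2 * t ≤ d^2 := by
        rw [← hr2]
        nlinarith [mul_le_mul hjd hjd (mul_nonneg (Nat.cast_nonneg (α := ℝ) j) hr.le) hd0]
      nlinarith [mul_nonneg hk₂.le (sub_nonneg.mpr hd2)]
    have hKreal : K t x y ≤ (C₁ * C₂ * Real.exp (-k₂*(j:ℝ)^2) * ((j:ℝ)+1)^S) / W := by
      refine le_trans hz ?_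
      have hsqpos : 0 < Real.sqrt (Vx * Vy) := lt_of_lt_of_le (by positivity) hsq
      have hstep : C₁ * Real.exp (-k₂*d^2/t) / Real.sqrt (Vx*Vy) ≤
          C₁ * Real.exp (-k₂*(j:ℝ)^2) / (a*W) :=
        div_le_div₀ (by positivity) (mul_le_mul_of_nonneg_left hexp (by positivity))
          (by positivity) hsq
      refine hstep.trans (le_of_eq ?_)
      have h1 : (r / Rj j) ^ S = (((j:ℝ)+1)^S)⁻¹ := by
        have h2 : r / Rj j = (((j:ℝ)+1))⁻¹ := by
          simp only [hRj]
          rw [mul_comm ((j:ℝ)+1) r, div_mul_eq_div_div, div_self hr.ne', one_div]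
        rw [h2, Real.inv_rpow (by positivity)]
      have hb : (0:ℝ) < ((j:ℝ)+1)^S := Real.rpow_pos_of_pos (by positivity) _
      rw [hadef, h1]
      field_simp
    have hKE : ENNReal.ofReal (K t x y) ≤
        ENNReal.ofReal (C₁ * C₂ * Real.exp (-k₂*(j:ℝ)^2) * ((j:ℝ)+1)^S) /
          μ (Metric.ball x (Rj j)) := by
      calc ENNReal.ofReal (K t x y)
          ≤ ENNReal.ofReal ((C₁ * C₂ * Real.exp (-k₂*(j:ℝ)^2) * ((j:ℝ)+1)^S) / W) :=
            ENNReal.ofReal_le_ofReal hKreal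
        _ = _ := by
            rw [ENNReal.ofReal_div_of_pos hW0, hWdef, ENNReal.ofReal_toReal (hμBT j x)]
    calc F (x, y) = ENNReal.ofReal (|u x - u y|^p) * ENNReal.ofReal (K t x y) := rfl
      _ ≤ ENNReal.ofReal (|u x - u y|^p) *
          (ENNReal.ofReal (C₁ * C₂ * Real.exp (-k₂*(j:ℝ)^2) * ((j:ℝ)+1)^S) /
            μ (Metric.ball x (Rj j))) := mul_le_mul_right hKE _
      _ = ENNReal.ofReal (C₁ * C₂ * Real.exp (-k₂*(j:ℝ)^2) * ((j:ℝ)+1)^S) *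
          (ENNReal.ofReal (|u x - u y|^p) / μ (Metric.ball x (Rj j))) := by
            rw [div_eq_mul_inv, div_eq_mul_inv]
            ring
  have perj : ∀ j : ℕ, (∫⁻ z, H j z ∂(μ.prod μ)) ≤ ENNReal.ofReal (g j * r^(α*p)) * M^p := by
    intro j
    have hIndmeas : Measurable (({w : X × X | dist w.1 w.2 < Rj j}).indicator
        (fun w => ENNReal.ofReal (|u w.1 - u w.2| ^ p) / μ (Metric.ball w.1 (Rj j)))) :=
      (hAmeas.div ((hballmeas (Rj j)).comp measurable_fst)).indicator (hSmeas j)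
    have h1 : (∫⁻ z, H j z ∂(μ.prod μ)) =
        ENNReal.ofReal (C₁ * C₂ * Real.exp (-k₂*(j:ℝ)^2) * ((j:ℝ)+1)^S) *
          ∫⁻ z, ({w : X × X | dist w.1 w.2 < Rj j}).indicator
            (fun w => ENNReal.ofReal (|u w.1 - u w.2| ^ p) / μ (Metric.ball w.1 (Rj j))) z
            ∂(μ.prod μ) := lintegral_const_mul' _ _ ENNReal.ofReal_ne_top
    have h2 : (∫⁻ z, ({w : X × X | dist w.1 w.2 < Rj j}).indicator
          (fun w => ENNReal.ofReal (|u w.1 - u w.2| ^ p) / μ (Metric.ball w.1 (Rj j))) z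
          ∂(μ.prod μ)) =
        ∫⁻ x, (∫⁻ y in Metric.ball x (Rj j), ENNReal.ofReal (|u x - u y| ^ p) ∂μ) /
          μ (Metric.ball x (Rj j)) ∂μ := by
      rw [lintegral_prod _ hIndmeas.aemeasurable]
      refine lintegral_congr fun x => ?_
      have hptwise : ∀ y : X, ({w : X × X | dist w.1 w.2 < Rj j}).indicator
            (fun w => ENNReal.ofReal (|u w.1 - u w.2| ^ p) / μ (Metric.ball w.1 (Rj j))) (x, y)
          = (Metric.ball x (Rj j)).indicator
            (fun y => ENNReal.ofReal (|u x - u y| ^ p) / μ (Metric.ball x (Rj j))) y := by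
        intro y
        by_cases hy : y ∈ Metric.ball x (Rj j)
        · rw [Set.indicator_of_mem, Set.indicator_of_mem hy]
          simpa [dist_comm] using hy
        · rw [Set.indicator_of_notMem, Set.indicator_of_notMem hy]
          simpa [dist_comm] using hy
      simp_rw [hptwise]
      rw [lintegral_indicator measurableSet_ball]
      simp_rw [div_eq_mul_inv]
      exact lintegral_mul_const' _ _ (ENNReal.inv_ne_top.mpr (hμB0 j x))
    have h3 : (0:ℝ) ≤ C₁ * C₂ * Real.exp (-k₂*(j:ℝ)^2) * ((j:ℝ)+1)^S := by
      have := Real.rpow_nonneg (by positivity : (0:ℝ) ≤ (j:ℝ)+1) S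
      positivity
    calc (∫⁻ z, H j z ∂(μ.prod μ))
        ≤ ENNReal.ofReal (C₁ * C₂ * Real.exp (-k₂*(j:ℝ)^2) * ((j:ℝ)+1)^S) *
          (ENNReal.ofReal ((Rj j) ^ (α * p)) * M ^ p) := by
          rw [h1, h2]
          exact mul_le_mul_right (step1 j) _
      _ = ENNReal.ofReal (g j * r^(α*p)) * M^p := by
          rw [← mul_assoc, ← ENNReal.ofReal_mul h3]
          congr 2
          simp only [hRj, hg]
          rw [Real.mul_rpow (by positivity) hr.le, Real.rpow_add (by positivity : (0:ℝ) < (j:ℝ)+1)]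
          ring
  have energy_bound : besovEnergy μ K p t u ≤ ENNReal.ofReal (Csum * r ^ (α * p)) * M ^ p := by
    have hiterF : besovEnergy μ K p t u = ∫⁻ z, F z ∂(μ.prod μ) := by
      calc besovEnergy μ K p t u = ∫⁻ x, ∫⁻ y, F (x, y) ∂μ ∂μ := rfl
        _ = ∫⁻ z, F z ∂(μ.prod μ) := (lintegral_prod F hFmeas.aemeasurable).symm
    rw [hiterF]
    calc (∫⁻ z, F z ∂(μ.prod μ)) ≤ ∫⁻ z, ∑' j, H j z ∂(μ.prod μ) := lintegral_mono_ae hFH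
      _ = ∑' j, ∫⁻ z, H j z ∂(μ.prod μ) := lintegral_tsum fun j => (hHmeas j).aemeasurable
      _ ≤ ∑' j, ENNReal.ofReal (g j * r^(α*p)) * M^p := ENNReal.tsum_le_tsum perj
      _ = (∑' j, ENNReal.ofReal (g j * r^(α*p))) * M^p := ENNReal.tsum_mul_right
      _ = ENNReal.ofReal (Csum * r ^ (α * p)) * M ^ p := by
          congr 1
          rw [← ENNReal.ofReal_tsum_of_nonneg (fun j => by positivity) (hgsum.mul_right _)]
          rw [tsum_mul_right]
  -- final computation
  have hCr0 : (0:ℝ) < Csum * r ^ (α*p) := by positivity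
  calc ENNReal.ofReal (t ^ (-(α/2))) * besovEnergy μ K p t u ^ (1/p)
      ≤ ENNReal.ofReal (t ^ (-(α/2))) * (ENNReal.ofReal (Csum * r ^ (α*p)) * M^p) ^ (1/p) :=
        mul_le_mul_right (ENNReal.rpow_le_rpow energy_bound (by positivity)) _
    _ = ENNReal.ofReal (Csum ^ (1/p)) * M := by
        rw [ENNReal.mul_rpow_of_nonneg _ _ (by positivity : (0:ℝ) ≤ 1/p)]
        rw [← ENNReal.rpow_mul, mul_one_div, div_self hp0, ENNReal.rpow_one]
        rw [ENNReal.ofReal_rpow_of_pos hCr0]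
        rw [Real.mul_rpow (le_of_lt hCsum0) (by positivity), ← Real.rpow_mul hr.le]
        have he : α * p * (1/p) = α := by field_simp
        rw [he, ENNReal.ofReal_mul (by positivity)]
        have hone : t ^ (-(α/2)) * r ^ α = 1 := by
          rw [hrdef, Real.sqrt_eq_rpow, ← Real.rpow_mul ht.le, ← Real.rpow_add ht]
          have h0 : -(α/2) + 1/2*α = 0 := by ring
          rw [h0, Real.rpow_zero]
        calc ENNReal.ofReal (t ^ (-(α/2))) *
              (ENNReal.ofReal (Csum ^ (1/p)) * ENNReal.ofReal (r ^ α) * M)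
            = ENNReal.ofReal (Csum ^ (1/p)) *
              ((ENNReal.ofReal (t ^ (-(α/2))) * ENNReal.ofReal (r ^ α)) * M) := by ring
          _ = ENNReal.ofReal (Csum ^ (1/p)) * M := by
              rw [← ENNReal.ofReal_mul (Real.rpow_nonneg ht.le _), hone, ENNReal.ofReal_one,
                one_mul]

end Main

/-- **Metric characterization of the Besov spaces** under two-sided Gaussian bounds,
positivity and finiteness of the measure of balls, and volume-ratio bounds:
`B^{p,α/2}(X) = B^α_{p,∞}(X)` with comparable seminorms. -/
theorem metric_characterization
    {X : Type*} [MetricSpace X] [MeasurableSpace X] [BorelSpace X]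
    (μ : Measure X) [SigmaFinite μ] (K : ℝ → X → X → ℝ) (hK : IsHeatKernel μ K)
    (C₁ k₁ k₂ : ℝ) (hC₁ : 1 ≤ C₁) (hk₁ : 0 < k₁) (hk₂ : 0 < k₂)
    (hGauss : ∀ t : ℝ, 0 < t → ∀ᵐ xy ∂(μ.prod μ),
      (1 / C₁) * Real.exp (-k₁ * dist xy.1 xy.2 ^ 2 / t) /
          Real.sqrt ((μ (Metric.ball xy.1 (Real.sqrt t))).toReal *
            (μ (Metric.ball xy.2 (Real.sqrt t))).toReal) ≤ K t xy.1 xy.2 ∧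
        K t xy.1 xy.2 ≤ C₁ * Real.exp (-k₂ * dist xy.1 xy.2 ^ 2 / t) /
          Real.sqrt ((μ (Metric.ball xy.1 (Real.sqrt t))).toReal *
            (μ (Metric.ball xy.2 (Real.sqrt t))).toReal))
    (hpos : ∀ (x : X) (r : ℝ), 0 < r → 0 < μ (Metric.ball x r) ∧ μ (Metric.ball x r) < ∞)
    (Q S C₂ : ℝ) (hQ : 0 < Q) (hQS : Q ≤ S) (hC₂ : 1 ≤ C₂)
    (hvol : ∀ (x y : X) (r R : ℝ), 0 < r → r ≤ R → y ∈ Metric.ball x R →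
      (1 / C₂) * (r / R) ^ S ≤ (μ (Metric.ball y r)).toReal / (μ (Metric.ball x R)).toReal ∧
        (μ (Metric.ball y r)).toReal / (μ (Metric.ball x R)).toReal ≤ C₂ * (r / R) ^ Q)
    (p α : ℝ) (hp : 1 ≤ p) (hα : 0 ≤ α) :
    ∃ c C : ℝ, 0 < c ∧ 0 < C ∧
      ∀ u : X → ℝ, MemLp u (ENNReal.ofReal p) μ →
        (ENNReal.ofReal c * metricBesovQ μ p α u ≤ besovSeminorm μ K p (α / 2) u ∧
          besovSeminorm μ K p (α / 2) u ≤ ENNReal.ofReal C * metricBesovQ μ p α u) ∧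
        (MemBesov μ K p (α / 2) u ↔ metricBesovQ μ p α u ≠ ∞) := by
  have hC₁0 : (0:ℝ) < C₁ := lt_of_lt_of_le one_pos hC₁
  have hC₂0 : (0:ℝ) < C₂ := lt_of_lt_of_le one_pos hC₂
  have hp' : (0:ℝ) < p := lt_of_lt_of_le one_pos hp
  have hsqrtC₂ : 0 < Real.sqrt C₂ := Real.sqrt_pos.mpr hC₂0
  have hc₀ : 0 < (1/C₁) * Real.exp (-k₁) / Real.sqrt C₂ := by positivity
  have hgsum : Summable (fun j : ℕ => C₁ * C₂ * Real.exp (-k₂ * (j:ℝ)^2) *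
      ((j:ℝ)+1) ^ (S + α*p)) := by
    have := (summable_aux (β := S + α*p) hk₂).mul_left (C₁ * C₂)
    refine this.congr fun j => ?_
    ring
  have hCsum0 : 0 < ∑' j : ℕ, C₁ * C₂ * Real.exp (-k₂ * (j:ℝ)^2) * ((j:ℝ)+1) ^ (S + α*p) := by
    refine Summable.tsum_pos hgsum (fun j => ?_) 0 ?_
    · have := Real.rpow_nonneg (by positivity : (0:ℝ) ≤ (j:ℝ)+1) (S + α*p)
      positivity
    · have h1 : (0:ℝ) < (((0:ℕ):ℝ)+1) ^ (S + α*p) := Real.rpow_pos_of_pos (by norm_num) _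
      have h2 : (0:ℝ) < Real.exp (-k₂ * ((0:ℕ):ℝ)^2) := Real.exp_pos _
      positivity
  refine ⟨((1/C₁) * Real.exp (-k₁) / Real.sqrt C₂) ^ (1/p),
    (∑' j : ℕ, C₁ * C₂ * Real.exp (-k₂ * (j:ℝ)^2) * ((j:ℝ)+1) ^ (S + α*p)) ^ (1/p),
    Real.rpow_pos_of_pos hc₀ _, Real.rpow_pos_of_pos hCsum0 _, fun u hu => ?_⟩
  set v : X → ℝ := hu.aestronglyMeasurable.mk u with hvdef
  have hv : Measurable v := hu.aestronglyMeasurable.stronglyMeasurable_mk.measurable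
  have huv : u =ᵐ[μ] v := hu.aestronglyMeasurable.ae_eq_mk
  have e1 : besovSeminorm μ K p (α/2) u = besovSeminorm μ K p (α/2) v :=
    besovSeminorm_congr huv
  have e2 : metricBesovQ μ p α u = metricBesovQ μ p α v := metricBesovQ_congr huv
  have lower := lower_estimate μ K C₁ k₁ hC₁ hk₁
    (fun t ht => (hGauss t ht).mono fun z hz => hz.1) hpos Q C₂ hC₂
    (fun x y r R h1 h2 h3 => (hvol x y r R h1 h2 h3).2) p α hp hα v
  have upper := upper_estimate μ K hK.measurable C₁ k₂ hC₁ hk₂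
    (fun t ht => (hGauss t ht).mono fun z hz => hz.2) hpos S C₂ hC₂
    (fun x y r R h1 h2 h3 => (hvol x y r R h1 h2 h3).1) p α hp hα v hv
  have hcne : ENNReal.ofReal (((1/C₁) * Real.exp (-k₁) / Real.sqrt C₂) ^ (1/p)) ≠ 0 :=
    (ENNReal.ofReal_pos.mpr (Real.rpow_pos_of_pos hc₀ _)).ne'
  refine ⟨⟨?_, ?_⟩, ?_⟩
  · rw [e1, e2]; exact lower
  · rw [e1, e2]; exact upper
  · unfold MemBesov
    constructor
    · rintro ⟨-, hfin⟩
      rw [e1] at hfin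
      rw [e2]
      intro hMtop
      rw [hMtop, ENNReal.mul_top hcne] at lower
      exact hfin (top_le_iff.mp lower)
    · intro hM
      rw [e2] at hM
      refine ⟨hu, ?_⟩
      rw [e1]
      exact ne_top_of_le_ne_top (ENNReal.mul_ne_top ENNReal.ofReal_ne_top hM) upper



end BesovDirichlet
end
end

section
/- Assume μ is Ahlfors d_H-regular and the heat kernel satisfies the lower sub-Gaussian estimate. Let 0 < α ≤ d_H/d_W and let E ⊆ X be a porous set: there is c_E > 0 such that for every 0 < r < diam(E) and every y ∈ E with d(y, X ∖ E) < r there exists z ∈ ∂E with B(z, c_E r) ⊆ B(y, r) ∩ (X ∖ E). Then there exists a constant C_E > 0, depending only on c_E and the structural constants, such that ‖1_E‖_{1,α} ≥ C_E · limsup_{r→0⁺} r^{−α d_W} μ({ x ∈ E : d(x, X ∖ E) < r }). -/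
open MeasureTheory ENNReal Metric Filter

noncomputable section

namespace BesovDirichlet

variable {X : Type*} [MeasurableSpace X]

/-- Ahlfors `d_H`-regularity of the measure `μ`. -/
def AhlforsRegular [PseudoMetricSpace X] (μ : Measure X) (c₁ c₂ dH : ℝ) : Prop :=
  ∀ (x : X) (r : ℝ), 0 < r →
    ENNReal.ofReal (c₁ * r ^ dH) ≤ μ (Metric.ball x r) ∧
      μ (Metric.ball x r) ≤ ENNReal.ofReal (c₂ * r ^ dH)

/-- Upper sub-Gaussian heat kernel estimate with parameters `d_H, d_W` and constants `c₃, c₄`. -/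
def SubGaussianUpperBound [PseudoMetricSpace X] (μ : Measure X) (K : ℝ → X → X → ℝ)
    (c₃ c₄ dH dW : ℝ) : Prop :=
  ∀ t : ℝ, 0 < t → ∀ᵐ xy ∂(μ.prod μ),
    K t xy.1 xy.2 ≤ c₃ * t ^ (-(dH / dW)) *
      Real.exp (-c₄ * (dist xy.1 xy.2 ^ dW / t) ^ (1 / (dW - 1)))

/-- Lower sub-Gaussian heat kernel estimate with parameters `d_H, d_W` and constants `c₅, c₆`. -/
def SubGaussianLowerBound [PseudoMetricSpace X] (μ : Measure X) (K : ℝ → X → X → ℝ)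
    (c₅ c₆ dH dW : ℝ) : Prop :=
  ∀ t : ℝ, 0 < t → ∀ᵐ xy ∂(μ.prod μ),
    c₅ * t ^ (-(dH / dW)) *
        Real.exp (-c₆ * (dist xy.1 xy.2 ^ dW / t) ^ (1 / (dW - 1))) ≤ K t xy.1 xy.2

/-- The metric Besov quantity `N_p^β(f,r) = r^{−(β+d_H/p)} (∬_{d(x,y)<r} |f(x)−f(y)|^p)^{1/p}`. -/
def metricBesovN [PseudoMetricSpace X] (μ : Measure X) (dH p β : ℝ) (f : X → ℝ) (r : ℝ) :
    ℝ≥0∞ :=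
  ENNReal.ofReal (r ^ (-(β + dH / p))) *
    (∫⁻ x, (∫⁻ y in Metric.ball x r, ENNReal.ofReal (|f x - f y| ^ p) ∂μ) ∂μ) ^ (1 / p)

/-- **Lower Besov bound for porous sets.** Under Ahlfors regularity and the lower
sub-Gaussian estimate, for `0 < α ≤ d_H/d_W` and every porous set `E` with porosity
constant `c_E`,
`‖1_E‖_{1,α} ≥ C_E limsup_{r→0⁺} r^{−αd_W} μ({x ∈ E : d(x, X∖E) < r})`,
where `C_E` depends only on `c_E` and the structural constants. -/
theorem porous_lower_bound (dH dW c₁ c₂ c₅ c₆ α cE : ℝ)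
    (hdH : 0 < dH) (hdW : 1 < dW) (hc₁ : 0 < c₁) (hc₂ : 0 < c₂)
    (hc₅ : 0 < c₅) (hc₆ : 0 < c₆) (hα0 : 0 < α) (hα1 : α ≤ dH / dW) (hcE : 0 < cE) :
    ∃ C : ℝ, 0 < C ∧
      ∀ (X : Type) [MetricSpace X] [MeasurableSpace X] [BorelSpace X]
        (μ : Measure X) [SigmaFinite μ] (K : ℝ → X → X → ℝ),
        IsHeatKernel μ K → AhlforsRegular μ c₁ c₂ dH →
        SubGaussianLowerBound μ K c₅ c₆ dH dW →
        ∀ E : Set X, MeasurableSet E →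
        (∀ r : ℝ, 0 < r → ENNReal.ofReal r < EMetric.diam E →
          ∀ y ∈ E, Metric.infDist y Eᶜ < r →
            ∃ z ∈ frontier E, Metric.ball z (cE * r) ⊆ Metric.ball y r ∩ Eᶜ) →
        ENNReal.ofReal C *
            Filter.limsup (fun r : ℝ =>
                ENNReal.ofReal (r ^ (-(α * dW))) * μ {x | x ∈ E ∧ Metric.infDist x Eᶜ < r})
              (nhdsWithin 0 (Set.Ioi 0)) ≤
          besovSeminorm μ K 1 α (E.indicator fun _ => (1 : ℝ)) := by

  classical
  set Creal : ℝ := c₁ * c₅ * cE ^ dH * Real.exp (-c₆) with hCreal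
  have hCpos : 0 < Creal := by positivity
  refine ⟨Creal, hCpos, ?_⟩
  intro X _ _ _ μ _ K hK hA hL E hE hporo
  set f : X → ℝ := E.indicator fun _ => (1:ℝ) with hf
  -- Main pointwise-in-r estimate
  have main : ∀ r : ℝ, 0 < r → ENNReal.ofReal r < EMetric.diam E →
      ENNReal.ofReal Creal * (ENNReal.ofReal (r ^ (-(α * dW))) *
        μ {x | x ∈ E ∧ Metric.infDist x Eᶜ < r}) ≤
      besovSeminorm μ K 1 α f := by
    intro r hr hrd
    set t : ℝ := r ^ dW with ht
    have htpos : 0 < t := Real.rpow_pos_of_pos hr dW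
    set S := {x | x ∈ E ∧ Metric.infDist x Eᶜ < r} with hS
    have hSmeas : MeasurableSet S :=
      hE.inter (isOpen_lt (Metric.continuous_infDist_pt _) continuous_const).measurableSet
    have hae := Measure.ae_ae_of_ae_prod (hL t htpos)
    -- pointwise lower bound constant
    have key : ∀ᵐ x ∂μ.restrict S, ENNReal.ofReal Creal ≤
        ∫⁻ y, ENNReal.ofReal (|f x - f y| ^ (1:ℝ)) * ENNReal.ofReal (K t x y) ∂μ := by
      filter_upwards [ae_restrict_of_ae hae, ae_restrict_mem hSmeas] with x hx hxS
      obtain ⟨hxE, hxd⟩ := hxS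
      obtain ⟨z, _, hzsub⟩ := hporo r hr hrd x hxE hxd
      have hball : MeasurableSet (Metric.ball z (cE * r)) := measurableSet_ball
      have hstep : ENNReal.ofReal (c₅ * r ^ (-dH) * Real.exp (-c₆)) *
            μ (Metric.ball z (cE * r)) ≤
          ∫⁻ y in Metric.ball z (cE * r),
            ENNReal.ofReal (|f x - f y| ^ (1:ℝ)) * ENNReal.ofReal (K t x y) ∂μ := by
        rw [← setLIntegral_const]
        refine lintegral_mono_ae ?_
        filter_upwards [ae_restrict_of_ae hx, ae_restrict_mem hball] with y hy hyB
        have hymem := hzsub hyB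
        have hyd : dist x y < r := by
          have : y ∈ Metric.ball x r := hymem.1
          simpa [Metric.mem_ball, dist_comm] using this
        have hyE : y ∈ Eᶜ := hymem.2
        have hfx : f x = 1 := Set.indicator_of_mem hxE _
        have hfy : f y = 0 := Set.indicator_of_notMem hyE _
        have habs : |f x - f y| ^ (1:ℝ) = 1 := by
          rw [hfx, hfy]; norm_num
        rw [habs]
        simp only [ENNReal.ofReal_one, one_mul]
        refine le_trans (ENNReal.ofReal_le_ofReal ?_) (ENNReal.ofReal_le_ofReal hy)
        -- real inequality
        have hdW0 : (0:ℝ) < dW := lt_trans one_pos hdW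
        have htr : t ^ (-(dH / dW)) = r ^ (-dH) := by
          rw [ht, ← Real.rpow_mul hr.le]
          congr 1
          field_simp
        have hsle : (dist x y ^ dW / t) ^ (1 / (dW - 1)) ≤ 1 := by
          refine Real.rpow_le_one (by positivity) ?_ (one_div_nonneg.mpr (by linarith))
          rw [div_le_one htpos, ht]
          exact Real.rpow_le_rpow dist_nonneg hyd.le hdW0.le
        have hsnn : (0:ℝ) ≤ (dist x y ^ dW / t) ^ (1 / (dW - 1)) := by positivity
        have hexp : Real.exp (-c₆) ≤
            Real.exp (-c₆ * (dist x y ^ dW / t) ^ (1 / (dW - 1))) := by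
          refine Real.exp_le_exp.mpr ?_
          nlinarith
        rw [htr]
        have hnn : (0:ℝ) ≤ c₅ * r ^ (-dH) := by positivity
        exact mul_le_mul_of_nonneg_left hexp hnn
      have hmeasure : ENNReal.ofReal (c₁ * (cE * r) ^ dH) ≤ μ (Metric.ball z (cE * r)) :=
        (hA z (cE * r) (by positivity)).1
      have hconst : ENNReal.ofReal Creal =
          ENNReal.ofReal (c₅ * r ^ (-dH) * Real.exp (-c₆)) *
            ENNReal.ofReal (c₁ * (cE * r) ^ dH) := by
        rw [← ENNReal.ofReal_mul (by positivity)]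
        congr 1
        have h1 : (cE * r) ^ dH = cE ^ dH * r ^ dH := Real.mul_rpow hcE.le hr.le
        have h2 : r ^ (-dH) * r ^ dH = 1 := by
          rw [← Real.rpow_add hr]; norm_num
        rw [hCreal, h1]
        nlinarith [h2, Real.exp_pos (-c₆), sq_nonneg (r ^ (-dH) * r ^ dH - 1)]
      calc ENNReal.ofReal Creal
          ≤ ENNReal.ofReal (c₅ * r ^ (-dH) * Real.exp (-c₆)) *
              μ (Metric.ball z (cE * r)) := by
            rw [hconst]; exact mul_le_mul_right hmeasure _
        _ ≤ ∫⁻ y in Metric.ball z (cE * r),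
              ENNReal.ofReal (|f x - f y| ^ (1:ℝ)) * ENNReal.ofReal (K t x y) ∂μ := hstep
        _ ≤ ∫⁻ y, ENNReal.ofReal (|f x - f y| ^ (1:ℝ)) * ENNReal.ofReal (K t x y) ∂μ :=
            setLIntegral_le_lintegral _ _
    -- energy lower bound
    have henergy : ENNReal.ofReal Creal * μ S ≤ besovEnergy μ K 1 t f := by
      calc ENNReal.ofReal Creal * μ S
          = ∫⁻ _ in S, ENNReal.ofReal Creal ∂μ := (setLIntegral_const _ _).symm
        _ ≤ ∫⁻ x in S,
              (∫⁻ y, ENNReal.ofReal (|f x - f y| ^ (1:ℝ)) * ENNReal.ofReal (K t x y) ∂μ) ∂μ :=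
            lintegral_mono_ae key
        _ ≤ ∫⁻ x,
              (∫⁻ y, ENNReal.ofReal (|f x - f y| ^ (1:ℝ)) * ENNReal.ofReal (K t x y) ∂μ) ∂μ :=
            setLIntegral_le_lintegral _ _
        _ = besovEnergy μ K 1 t f := rfl
    -- pass to the seminorm
    have hsem : ENNReal.ofReal (t ^ (-α)) * besovEnergy μ K 1 t f ^ (1/(1:ℝ)) ≤
        besovSeminorm μ K 1 α f :=
      le_iSup₂ (f := fun (s : ℝ) (_ : 0 < s) =>
        ENNReal.ofReal (s ^ (-α)) * besovEnergy μ K 1 s f ^ (1/(1:ℝ))) t htpos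
    have hpow : besovEnergy μ K 1 t f ^ (1/(1:ℝ)) = besovEnergy μ K 1 t f := by
      norm_num
    have hexp2 : t ^ (-α) = r ^ (-(α * dW)) := by
      rw [ht, ← Real.rpow_mul hr.le]
      congr 1; ring
    calc ENNReal.ofReal Creal * (ENNReal.ofReal (r ^ (-(α * dW))) * μ S)
        = ENNReal.ofReal (t ^ (-α)) * (ENNReal.ofReal Creal * μ S) := by
          rw [hexp2]; ring
      _ ≤ ENNReal.ofReal (t ^ (-α)) * besovEnergy μ K 1 t f :=
          mul_le_mul_right henergy _
      _ = ENNReal.ofReal (t ^ (-α)) * besovEnergy μ K 1 t f ^ (1/(1:ℝ)) := by rw [hpow]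
      _ ≤ besovSeminorm μ K 1 α f := hsem
  -- Now the limsup argument
  by_cases hdiam : EMetric.diam E = 0
  · -- degenerate: E is a subsingleton, all measures vanish
    have hE0 : μ E = 0 := by
      rcases Set.eq_empty_or_nonempty E with h | ⟨x₀, hx₀⟩
      · simp [h]
      · have hsub : E ⊆ {x₀} := fun x hx => by
          simpa using (EMetric.diam_eq_zero_iff.mp hdiam) hx hx₀
        have hx0 : μ ({x₀} : Set X) = 0 := by
          refine le_antisymm ?_ zero_le
          refine ENNReal.le_of_forall_pos_le_add fun ε hε _ => ?_
          rw [zero_add]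
          set δ : ℝ := ((ε:ℝ) / (2 * c₂)) ^ (dH⁻¹) with hδ
          have hεR : (0:ℝ) < (ε:ℝ) := hε
          have hδpos : 0 < δ := Real.rpow_pos_of_pos (by positivity) _
          have hball := (hA x₀ δ hδpos).2
          have hsub2 : ({x₀} : Set X) ⊆ Metric.ball x₀ δ := by
            intro x hx; simp at hx; simp [hx, hδpos]
          refine le_trans (measure_mono hsub2) (le_trans hball ?_)
          have hcalc : c₂ * δ ^ dH = (ε:ℝ) / 2 := by
            rw [hδ, Real.rpow_inv_rpow (by positivity) (ne_of_gt hdH)]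
            field_simp
          rw [hcalc]
          calc ENNReal.ofReal ((ε:ℝ)/2) ≤ ENNReal.ofReal (ε:ℝ) :=
                ENNReal.ofReal_le_ofReal (by linarith)
            _ = (ε : ℝ≥0∞) := ENNReal.ofReal_coe_nnreal
        exact le_antisymm (le_trans (measure_mono hsub) hx0.le) zero_le
    have hzero : ∀ r : ℝ,
        ENNReal.ofReal (r ^ (-(α * dW))) * μ {x | x ∈ E ∧ Metric.infDist x Eᶜ < r} = 0 := by
      intro r
      have : μ {x | x ∈ E ∧ Metric.infDist x Eᶜ < r} = 0 :=
        le_antisymm (le_trans (measure_mono fun x hx => hx.1) hE0.le) zero_le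
      rw [this, mul_zero]
    have hls : Filter.limsup (fun r : ℝ =>
        ENNReal.ofReal (r ^ (-(α * dW))) * μ {x | x ∈ E ∧ Metric.infDist x Eᶜ < r})
          (nhdsWithin 0 (Set.Ioi 0)) ≤ 0 :=
      limsup_le_of_le (by isBoundedDefault) (Filter.Eventually.of_forall fun r => (hzero r).le)
    calc ENNReal.ofReal Creal * Filter.limsup _ _
        ≤ ENNReal.ofReal Creal * 0 := mul_le_mul_right hls _
      _ = 0 := mul_zero _
      _ ≤ besovSeminorm μ K 1 α f := zero_le
  · -- nondegenerate case
    have hd : (0:ℝ≥0∞) < EMetric.diam E := pos_iff_ne_zero.mpr hdiam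
    obtain ⟨ε, hε0, hεd⟩ : ∃ ε : ℝ, 0 < ε ∧ ENNReal.ofReal ε < EMetric.diam E := by
      rcases ENNReal.lt_iff_exists_real_btwn.mp hd with ⟨q, _, hq1, hq2⟩
      exact ⟨q, ENNReal.ofReal_pos.mp hq1, hq2⟩
    have hC0 : ENNReal.ofReal Creal ≠ 0 := (ENNReal.ofReal_pos.mpr hCpos).ne'
    have hCtop : ENNReal.ofReal Creal ≠ ⊤ := ENNReal.ofReal_ne_top
    have hev : ∀ᶠ r in nhdsWithin (0:ℝ) (Set.Ioi 0),
        ENNReal.ofReal (r ^ (-(α * dW))) * μ {x | x ∈ E ∧ Metric.infDist x Eᶜ < r} ≤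
          besovSeminorm μ K 1 α f / ENNReal.ofReal Creal := by
      filter_upwards [Ioo_mem_nhdsGT_of_mem (Set.left_mem_Ico.mpr hε0)] with r hrIoo
      have hr0 : 0 < r := hrIoo.1
      have hrd : ENNReal.ofReal r < EMetric.diam E :=
        lt_of_le_of_lt (ENNReal.ofReal_le_ofReal hrIoo.2.le) hεd
      have hmain := main r hr0 hrd
      rw [ENNReal.le_div_iff_mul_le (Or.inl hC0) (Or.inl hCtop)]
      rwa [mul_comm] at hmain
    have hls := limsup_le_of_le (by isBoundedDefault) hev
    calc ENNReal.ofReal Creal * Filter.limsup _ _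
        ≤ ENNReal.ofReal Creal * (besovSeminorm μ K 1 α f / ENNReal.ofReal Creal) :=
          mul_le_mul_right hls _
      _ = besovSeminorm μ K 1 α f := ENNReal.mul_div_cancel hC0 hCtop

end BesovDirichlet
end
end

section
/- Assume the heat kernel satisfies the lower sub-Gaussian estimate. Let E ⊆ X be measurable and suppose there exist δ > 0, ε > 0 and c₈ > 0 such that (μ×μ)({ (x,y) ∈ (X∖E) × E : d(x,y) < ε }) ≥ c₈ ε^{d_H+δ}. Then, with t = ε^{d_W}, one has t^{−δ/d_W} · ‖P_t 1_E − 1_E‖_{L¹(X,μ)} ≥ 2 c₅ c₈ e^{−c₆} > 0. -/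
open MeasureTheory ENNReal Metric Filter

noncomputable section

namespace BesovDirichlet

variable {X : Type*} [MeasurableSpace X]

/-- **Lower bound on `‖P_t 1_E − 1_E‖₁`.** Under the lower sub-Gaussian estimate, if the
measure of `ε`-close pairs in `Eᶜ × E` is at least `c₈ ε^{d_H+δ}`, then, for `t = ε^{d_W}`,
`t^{−δ/d_W} ‖P_t 1_E − 1_E‖_{L¹(X,μ)} ≥ 2 c₅ c₈ e^{−c₆} > 0`. -/
theorem neighborhood_lower_bound
    {X : Type*} [MetricSpace X] [MeasurableSpace X] [BorelSpace X]
    (μ : Measure X) [SigmaFinite μ] (K : ℝ → X → X → ℝ) (hK : IsHeatKernel μ K)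
    (dH dW c₅ c₆ : ℝ) (hdH : 0 < dH) (hdW : 1 < dW) (hc₅ : 0 < c₅) (hc₆ : 0 < c₆)
    (hL : SubGaussianLowerBound μ K c₅ c₆ dH dW)
    (E : Set X) (hE : MeasurableSet E)
    (δ ε c₈ : ℝ) (hδ : 0 < δ) (hε : 0 < ε) (hc₈ : 0 < c₈)
    (hlow : ENNReal.ofReal (c₈ * ε ^ (dH + δ)) ≤
      (μ.prod μ) {xy : X × X | xy.1 ∉ E ∧ xy.2 ∈ E ∧ dist xy.1 xy.2 < ε}) :
    ENNReal.ofReal (2 * c₅ * c₈ * Real.exp (-c₆)) ≤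
      ENNReal.ofReal ((ε ^ dW) ^ (-(δ / dW))) *
        (∫⁻ x, ENNReal.ofReal
          |heatOp μ K (ε ^ dW) (E.indicator fun _ => (1 : ℝ)) x -
            E.indicator (fun _ => (1 : ℝ)) x| ∂μ) := by
  classical
  set t : ℝ := ε ^ dW with htdef
  have ht : 0 < t := Real.rpow_pos_of_pos hε dW
  have hKm : Measurable fun xy : X × X => K t xy.1 xy.2 := hK.measurable t
  -- a.e. integrability from conservativity
  have hcons := hK.conservative t ht
  have hint : ∀ᵐ x ∂μ, Integrable (fun y => K t x y) μ := by
    filter_upwards [hcons] with x hx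
    by_contra h
    rw [MeasureTheory.integral_undef h] at hx
    norm_num at hx
  -- pointwise identity off E
  have hEc : ∀ᵐ x ∂μ.restrict Eᶜ,
      ENNReal.ofReal |heatOp μ K t (E.indicator fun _ => (1:ℝ)) x -
        E.indicator (fun _ => (1:ℝ)) x| = ∫⁻ y in E, ENNReal.ofReal (K t x y) ∂μ := by
    filter_upwards [ae_restrict_of_ae hint, ae_restrict_mem hE.compl] with x hIx hxE
    have hEq : (fun y => K t x y * E.indicator (fun _ => (1:ℝ)) y)
        = E.indicator (fun y => K t x y) := by
      funext y; by_cases hy : y ∈ E <;> simp [hy]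
    have h1 : heatOp μ K t (E.indicator fun _ => (1:ℝ)) x = ∫ y in E, K t x y ∂μ := by
      rw [heatOp, hEq, integral_indicator hE]
    have h2 : (0:ℝ) ≤ ∫ y in E, K t x y ∂μ :=
      integral_nonneg fun y => hK.nonneg t x y
    rw [h1, Set.indicator_of_notMem hxE, sub_zero, abs_of_nonneg h2,
      ofReal_integral_eq_lintegral_ofReal hIx.restrict
        (Filter.Eventually.of_forall fun y => hK.nonneg t x y)]
  -- pointwise identity on E
  have hEi : ∀ᵐ x ∂μ.restrict E,
      ENNReal.ofReal |heatOp μ K t (E.indicator fun _ => (1:ℝ)) x -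
        E.indicator (fun _ => (1:ℝ)) x| = ∫⁻ y in Eᶜ, ENNReal.ofReal (K t x y) ∂μ := by
    filter_upwards [ae_restrict_of_ae (hint.and hcons), ae_restrict_mem hE]
      with x hx hxE
    obtain ⟨hIx, hcx⟩ := hx
    have hEq : (fun y => K t x y * E.indicator (fun _ => (1:ℝ)) y)
        = E.indicator (fun y => K t x y) := by
      funext y; by_cases hy : y ∈ E <;> simp [hy]
    have h1 : heatOp μ K t (E.indicator fun _ => (1:ℝ)) x = ∫ y in E, K t x y ∂μ := by
      rw [heatOp, hEq, integral_indicator hE]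
    have hadd : (∫ y in E, K t x y ∂μ) + (∫ y in Eᶜ, K t x y ∂μ) = 1 := by
      rw [integral_add_compl hE hIx]; exact hcx
    have h2 : (0:ℝ) ≤ ∫ y in Eᶜ, K t x y ∂μ :=
      integral_nonneg fun y => hK.nonneg t x y
    have h3 : heatOp μ K t (E.indicator fun _ => (1:ℝ)) x -
        E.indicator (fun _ => (1:ℝ)) x = -(∫ y in Eᶜ, K t x y ∂μ) := by
      rw [h1, Set.indicator_of_mem hxE]; linarith
    rw [h3, abs_neg, abs_of_nonneg h2,
      ofReal_integral_eq_lintegral_ofReal hIx.restrict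
        (Filter.Eventually.of_forall fun y => hK.nonneg t x y)]
  -- split the integral
  have hsplit : (∫⁻ x, ENNReal.ofReal
        |heatOp μ K t (E.indicator fun _ => (1:ℝ)) x -
          E.indicator (fun _ => (1:ℝ)) x| ∂μ)
      = (∫⁻ x in E, ∫⁻ y in Eᶜ, ENNReal.ofReal (K t x y) ∂μ ∂μ)
        + (∫⁻ x in Eᶜ, ∫⁻ y in E, ENNReal.ofReal (K t x y) ∂μ ∂μ) := by
    rw [← lintegral_add_compl _ hE]
    congr 1
    · exact lintegral_congr_ae hEi
    · exact lintegral_congr_ae hEc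
  -- product form
  have hmK : Measurable fun xy : X × X => ENNReal.ofReal (K t xy.1 xy.2) :=
    ENNReal.measurable_ofReal.comp hKm
  have hI1 : (∫⁻ x in Eᶜ, ∫⁻ y in E, ENNReal.ofReal (K t x y) ∂μ ∂μ)
      = ∫⁻ xy in Eᶜ ×ˢ E, ENNReal.ofReal (K t xy.1 xy.2) ∂(μ.prod μ) := by
    rw [← Measure.prod_restrict, lintegral_prod _ hmK.aemeasurable]
  -- symmetry of K
  have hI2 : (∫⁻ x in E, ∫⁻ y in Eᶜ, ENNReal.ofReal (K t x y) ∂μ ∂μ)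
      = ∫⁻ x in Eᶜ, ∫⁻ y in E, ENNReal.ofReal (K t x y) ∂μ ∂μ := by
    have hs : (∫⁻ x in E, ∫⁻ y in Eᶜ, ENNReal.ofReal (K t x y) ∂μ ∂μ)
        = ∫⁻ x in E, ∫⁻ y in Eᶜ, ENNReal.ofReal (K t y x) ∂μ ∂μ := by
      congr 1; funext x; congr 1; funext y; rw [hK.symm t x y]
    rw [hs]
    exact lintegral_lintegral_swap
      ((ENNReal.measurable_ofReal.comp (hKm.comp measurable_swap)).aemeasurable)
  -- the constant κ
  set κ : ℝ := c₅ * t ^ (-(dH / dW)) * Real.exp (-c₆) with hκdef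
  have hκpos : 0 < κ := by positivity
  set B : Set (X × X) := {xy | κ ≤ K t xy.1 xy.2} ∩ (Eᶜ ×ˢ E) with hBdef
  have hBm : MeasurableSet B :=
    (measurableSet_le measurable_const hKm).inter (hE.compl.prod hE)
  have hLae := hL t ht
  have hnull : (μ.prod μ) {xy : X × X | ¬ (c₅ * t ^ (-(dH / dW)) *
      Real.exp (-c₆ * (dist xy.1 xy.2 ^ dW / t) ^ (1 / (dW - 1))) ≤ K t xy.1 xy.2)} = 0 :=
    ae_iff.mp hLae
  have hSB : (μ.prod μ) {xy : X × X | xy.1 ∉ E ∧ xy.2 ∈ E ∧ dist xy.1 xy.2 < ε}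
      ≤ (μ.prod μ) B := by
    have hsub : {xy : X × X | xy.1 ∉ E ∧ xy.2 ∈ E ∧ dist xy.1 xy.2 < ε}
        ⊆ B ∪ {xy : X × X | ¬ (c₅ * t ^ (-(dH / dW)) *
          Real.exp (-c₆ * (dist xy.1 xy.2 ^ dW / t) ^ (1 / (dW - 1))) ≤ K t xy.1 xy.2)} := by
      rintro ⟨x, y⟩ ⟨hx, hy, hd⟩
      by_cases hP : c₅ * t ^ (-(dH / dW)) *
          Real.exp (-c₆ * (dist x y ^ dW / t) ^ (1 / (dW - 1))) ≤ K t x y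
      · left
        refine ⟨le_trans ?_ hP, hx, hy⟩
        have hr0 : (0:ℝ) ≤ dist x y ^ dW / t :=
          div_nonneg (Real.rpow_nonneg dist_nonneg _) ht.le
      
        have hr1 : (dist x y ^ dW / t) ^ (1 / (dW - 1)) ≤ 1 := by
          apply Real.rpow_le_one hr0
          · rw [div_le_one ht, htdef]
            exact Real.rpow_le_rpow dist_nonneg hd.le (by linarith)
          · exact div_nonneg one_pos.le (by linarith)
        have hr0' : (0:ℝ) ≤ (dist x y ^ dW / t) ^ (1 / (dW - 1)) :=
          Real.rpow_nonneg hr0 _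
        have hexp : Real.exp (-c₆) ≤
            Real.exp (-c₆ * (dist x y ^ dW / t) ^ (1 / (dW - 1))) :=
          Real.exp_le_exp.mpr (by nlinarith)
        rw [hκdef]
        exact mul_le_mul_of_nonneg_left hexp (by positivity)
      · right; exact hP
    refine le_trans (measure_mono hsub) (le_trans (measure_union_le _ _) ?_)
    rw [hnull, add_zero]
  -- lower bound on the product integral
  have hIlow : ENNReal.ofReal κ * ENNReal.ofReal (c₈ * ε ^ (dH + δ)) ≤
      ∫⁻ xy in Eᶜ ×ˢ E, ENNReal.ofReal (K t xy.1 xy.2) ∂(μ.prod μ) :=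
    calc ENNReal.ofReal κ * ENNReal.ofReal (c₈ * ε ^ (dH + δ))
        ≤ ENNReal.ofReal κ *
            (μ.prod μ) {xy : X × X | xy.1 ∉ E ∧ xy.2 ∈ E ∧ dist xy.1 xy.2 < ε} :=
          mul_le_mul_right hlow _
      _ ≤ ENNReal.ofReal κ * (μ.prod μ) B := mul_le_mul_right hSB _
      _ = ∫⁻ _ in B, ENNReal.ofReal κ ∂(μ.prod μ) := (setLIntegral_const B _).symm
      _ ≤ ∫⁻ xy in B, ENNReal.ofReal (K t xy.1 xy.2) ∂(μ.prod μ) :=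
          setLIntegral_mono hmK fun xy hxy => ENNReal.ofReal_le_ofReal hxy.1
      _ ≤ ∫⁻ xy in Eᶜ ×ˢ E, ENNReal.ofReal (K t xy.1 xy.2) ∂(μ.prod μ) :=
          lintegral_mono_set Set.inter_subset_right
  have htotal : 2 * (ENNReal.ofReal κ * ENNReal.ofReal (c₈ * ε ^ (dH + δ))) ≤
      ∫⁻ x, ENNReal.ofReal
        |heatOp μ K t (E.indicator fun _ => (1:ℝ)) x -
          E.indicator (fun _ => (1:ℝ)) x| ∂μ := by
    rw [hsplit, hI2, hI1, two_mul]
    exact add_le_add hIlow hIlow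
  refine le_trans ?_ (mul_le_mul_right htotal _)
  have hκ' : κ = c₅ * ε ^ (-dH) * Real.exp (-c₆) := by
    rw [hκdef, htdef, ← Real.rpow_mul hε.le,
      show dW * -(dH / dW) = -dH by field_simp]
  have ht' : t ^ (-(δ / dW)) = ε ^ (-δ) := by
    rw [htdef, ← Real.rpow_mul hε.le, show dW * -(δ / dW) = -δ by field_simp]
  rw [ht', hκ',
    show (2:ℝ≥0∞) = ENNReal.ofReal 2 from (ENNReal.ofReal_ofNat 2).symm,
    ← ENNReal.ofReal_mul (by positivity : (0:ℝ) ≤ c₅ * ε ^ (-dH) * Real.exp (-c₆)),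
    ← ENNReal.ofReal_mul (by norm_num : (0:ℝ) ≤ 2),
    ← ENNReal.ofReal_mul (by positivity : (0:ℝ) ≤ ε ^ (-δ))]
  refine ENNReal.ofReal_le_ofReal (le_of_eq ?_)
  have hone : ε ^ (-δ) * ε ^ (-dH) * ε ^ (dH + δ) = 1 := by
    rw [← Real.rpow_add hε, ← Real.rpow_add hε,
      show -δ + -dH + (dH + δ) = 0 by ring, Real.rpow_zero]
  calc 2 * c₅ * c₈ * Real.exp (-c₆)
      = (2 * c₅ * c₈ * Real.exp (-c₆)) * (ε ^ (-δ) * ε ^ (-dH) * ε ^ (dH + δ)) := by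
        rw [hone, mul_one]
    _ = ε ^ (-δ) * (2 * (c₅ * ε ^ (-dH) * Real.exp (-c₆) * (c₈ * ε ^ (dH + δ)))) := by
        ring

end BesovDirichlet
end
end

section
/- Let (X, d) be a geodesic metric space and μ an Ahlfors d_H-regular Borel measure on X. Let E ⊆ X have compact topological boundary ∂E, let δ > 0, and assume there exist C₀ > 0 and ε₀ > 0 such that μ((∂E)_ε) ≤ C₀ ε^{δ} for every 0 < ε ≤ ε₀, where (∂E)_ε = { x ∈ X : d(x, ∂E) < ε }. Then there exists a constant c₇ > 0 such that for every ε > 0: (μ⊗μ)({ (x,y) ∈ (X∖E) × E : d(x,y) < ε }) ≤ c₇ ( ε^{d_H+δ} + ε^{2 d_H} ). -/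
open MeasureTheory ENNReal Metric Filter

noncomputable section

namespace BesovDirichlet

variable {X : Type*} [MeasurableSpace X]

section Helpers

open Set

/-- A preconnected set meeting both `E` and `Eᶜ` meets the frontier of `E`. -/
lemma preconn_meets_frontier {X : Type*} [TopologicalSpace X] {s E : Set X}
    (hs : IsPreconnected s) {x y : X} (hx : x ∈ s) (hy : y ∈ s)
    (hxE : x ∉ E) (hyE : y ∈ E) : (s ∩ frontier E).Nonempty := by
  by_contra hdisj
  rw [Set.not_nonempty_iff_eq_empty] at hdisj
  have hmem : ∀ z ∈ s, z ∉ frontier E := by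
    intro z hz hzf
    exact absurd (Set.mem_inter hz hzf) (by simp [hdisj])
  have hcover : s ⊆ interior E ∪ (closure E)ᶜ := by
    intro z hz
    by_cases h : z ∈ closure E
    · left
      rcases (closure_eq_interior_union_frontier E ▸ h) with h' | h'
      · exact h'
      · exact absurd h' (hmem z hz)
    · right; exact h
  have hxu : x ∈ (closure E)ᶜ := by
    intro h
    rcases (closure_eq_interior_union_frontier E ▸ h) with h' | h'
    · exact hxE (interior_subset h')
    · exact hmem x hx h'
  have hyu : y ∈ interior E := by
    have h : y ∈ closure E := subset_closure hyE
    rcases (closure_eq_interior_union_frontier E ▸ h) with h' | h'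
    · exact h'
    · exact absurd h' (hmem y hy)
  obtain ⟨z, hz⟩ := hs (interior E) (closure E)ᶜ isOpen_interior isClosed_closure.isOpen_compl
    hcover ⟨y, hy, hyu⟩ ⟨x, hx, hxu⟩
  exact (hz.2.2 (subset_closure (interior_subset hz.2.1)))


lemma second_countable_of_ahlfors {X : Type*} [MetricSpace X] [MeasurableSpace X] [OpensMeasurableSpace X]
    (μ : Measure X) (dH c₁ c₂ : ℝ) (hc₁ : 0 < c₁) (hc₂ : 0 < c₂)
    (hA : ∀ (x : X) (r : ℝ), 0 < r →
      ENNReal.ofReal (c₁ * r ^ dH) ≤ μ (Metric.ball x r) ∧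
        μ (Metric.ball x r) ≤ ENNReal.ofReal (c₂ * r ^ dH)) :
    SecondCountableTopology X := by
  rcases isEmpty_or_nonempty X with h | ⟨⟨x₀⟩⟩
  · exact Metric.secondCountable_of_almost_dense_set fun ε _ =>
      ⟨∅, countable_empty, fun x => (h.false x).elim⟩
  classical
  apply Metric.secondCountable_of_almost_dense_set
  intro ε hε
  have key : ∀ R : ℝ, ∃ t : Set X, t.Countable ∧ ball x₀ R ⊆ ⋃ y ∈ t, ball y ε := by
    intro R
    by_contra hnot
    push_neg at hnot
    have H : ∀ t : Finset X, ∃ p, p ∈ ball x₀ R ∧ ∀ y ∈ t, ε ≤ dist p y := by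
      intro t
      have h1 := hnot t t.countable_toSet
      rw [Set.not_subset] at h1
      obtain ⟨p, hp, hp2⟩ := h1
      refine ⟨p, hp, fun y hy => ?_⟩
      by_contra hlt
      push_neg at hlt
      exact hp2 (Set.mem_biUnion hy (mem_ball.mpr hlt))
    choose pick hpick₁ hpick₂ using H
    let Frec : ℕ → Finset X := fun n =>
      Nat.rec (motive := fun _ => Finset X) ∅ (fun _ s => insert (pick s) s) n
    let p : ℕ → X := fun n => pick (Frec n)
    have hFsucc : ∀ n, Frec (n + 1) = insert (p n) (Frec n) := fun n => rfl
    have hmem : ∀ n, p n ∈ Frec (n + 1) := fun n => by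
      rw [hFsucc]; exact Finset.mem_insert_self _ _
    have hmono : Monotone Frec := monotone_nat_of_le_succ fun n => by
      rw [hFsucc]; exact Finset.subset_insert _ _
    have hsep : ∀ i j, i < j → ε ≤ dist (p j) (p i) := by
      intro i j hij
      exact hpick₂ (Frec j) (p i) (hmono hij (hmem i))
    have hballR : ∀ n, p n ∈ ball x₀ R := fun n => hpick₁ (Frec n)
    have hR : 0 < R := lt_of_le_of_lt dist_nonneg (mem_ball.mp (hballR 0))
    -- measure contradiction
    have hRε : 0 < R + ε := by linarith
    have bound : ∀ n : ℕ, (n : ℝ≥0∞) * ENNReal.ofReal (c₁ * (ε / 2) ^ dH) ≤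
        ENNReal.ofReal (c₂ * (R + ε) ^ dH) := by
      intro n
      have hdisj : (↑(Finset.range n) : Set ℕ).PairwiseDisjoint
          (fun i => ball (p i) (ε / 2)) := by
        intro i _ j _ hij
        rcases hij.lt_or_gt with h | h
        · exact ball_disjoint_ball (by rw [dist_comm]; linarith [hsep i j h])
        · exact ball_disjoint_ball (by linarith [hsep j i h])
      have hsum : ∑ i ∈ Finset.range n, μ (ball (p i) (ε / 2)) =
          μ (⋃ i ∈ Finset.range n, ball (p i) (ε / 2)) :=
        (measure_biUnion_finset hdisj fun i _ => measurableSet_ball).symm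
      have hsub : (⋃ i ∈ Finset.range n, ball (p i) (ε / 2)) ⊆ ball x₀ (R + ε) := by
        intro q hq
        obtain ⟨i, _, hqi⟩ := Set.mem_iUnion₂.mp hq
        rw [mem_ball] at *
        calc dist q x₀ ≤ dist q (p i) + dist (p i) x₀ := dist_triangle _ _ _
          _ < ε / 2 + R := add_lt_add hqi (hballR i)
          _ ≤ R + ε := by linarith
      calc (n : ℝ≥0∞) * ENNReal.ofReal (c₁ * (ε / 2) ^ dH)
          = ∑ _i ∈ Finset.range n, ENNReal.ofReal (c₁ * (ε / 2) ^ dH) := by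
            rw [Finset.sum_const, nsmul_eq_mul, Finset.card_range]
        _ ≤ ∑ i ∈ Finset.range n, μ (ball (p i) (ε / 2)) :=
            Finset.sum_le_sum fun i _ => (hA (p i) (ε / 2) (by linarith)).1
        _ = μ (⋃ i ∈ Finset.range n, ball (p i) (ε / 2)) := hsum
        _ ≤ μ (ball x₀ (R + ε)) := measure_mono hsub
        _ ≤ ENNReal.ofReal (c₂ * (R + ε) ^ dH) := (hA x₀ (R + ε) hRε).2
    have hapos : (0:ℝ) < c₁ * (ε / 2) ^ dH := by positivity
    obtain ⟨n, hn⟩ := exists_nat_gt (c₂ * (R + ε) ^ dH / (c₁ * (ε / 2) ^ dH))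
    have := bound n
    rw [← ENNReal.ofReal_natCast, ← ENNReal.ofReal_mul (Nat.cast_nonneg n),
      ENNReal.ofReal_le_ofReal_iff (by positivity)] at this
    rw [div_lt_iff₀ hapos] at hn
    linarith
  choose t ht₁ ht₂ using key
  refine ⟨⋃ n : ℕ, t n, countable_iUnion fun n => ht₁ n, fun x => ?_⟩
  obtain ⟨n, hn⟩ := exists_nat_gt (dist x x₀)
  obtain ⟨y, hy, hxy⟩ := Set.mem_iUnion₂.mp (ht₂ n (mem_ball.mpr hn))
  exact ⟨y, Set.mem_iUnion.mpr ⟨n, hy⟩, (mem_ball.mp hxy).le⟩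

lemma geodesic_frontier {X : Type*} [MetricSpace X] {E : Set X}
    (hgeo : ∀ x y : X, ∃ f : ℝ → X, f 0 = x ∧ f (dist x y) = y ∧
      ∀ s ∈ Set.Icc (0 : ℝ) (dist x y), ∀ t ∈ Set.Icc (0 : ℝ) (dist x y),
        dist (f s) (f t) = |s - t|)
    {x y : X} (hx : x ∉ E) (hy : y ∈ E) :
    ∃ z ∈ frontier E, dist x z ≤ dist x y := by
  obtain ⟨f, hf0, hfD, hiso⟩ := hgeo x y
  set D := dist x y with hD
  have hD0 : 0 ≤ D := dist_nonneg
  have hcont : ContinuousOn f (Set.Icc 0 D) := by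
    have : LipschitzOnWith 1 f (Set.Icc 0 D) := by
      intro s hs t ht
      rw [edist_dist, hiso s hs t ht]
      simp [edist_dist, Real.dist_eq]
    exact this.continuousOn
  have hpre : IsPreconnected (f '' Set.Icc 0 D) :=
    (isPreconnected_Icc).image f hcont
  have hxmem : x ∈ f '' Set.Icc 0 D := ⟨0, by simp [hD0], hf0⟩
  have hymem : y ∈ f '' Set.Icc 0 D := ⟨D, by simp [hD0], hfD⟩
  obtain ⟨z, ⟨t, ht, rfl⟩, hzf⟩ := preconn_meets_frontier hpre hxmem hymem hx hy
  refine ⟨f t, hzf, ?_⟩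
  have := hiso 0 (by simp [hD0]) t ht
  rw [hf0] at this
  rw [this, abs_sub_comm, abs_of_nonneg (by simpa using ht.1)]
  linarith [ht.2]



end Helpers

/-- **Boundary neighborhood bound in geodesic Ahlfors-regular spaces.** If `E` has compact
topological boundary and `μ((∂E)_ε) ≤ C₀ ε^δ` for all small `ε > 0`, then there is
`c₇ > 0` with `(μ⊗μ)({(x,y) ∈ Eᶜ × E : d(x,y) < ε}) ≤ c₇ (ε^{d_H+δ} + ε^{2d_H})` for
every `ε > 0`. -/
theorem boundary_neighborhood_bound
    {X : Type*} [MetricSpace X] [MeasurableSpace X] [BorelSpace X]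
    (μ : Measure X) [SigmaFinite μ]
    (dH c₁ c₂ : ℝ) (hdH : 0 < dH) (hc₁ : 0 < c₁) (hc₂ : 0 < c₂)
    (hA : AhlforsRegular μ c₁ c₂ dH)
    (hgeo : ∀ x y : X, ∃ f : ℝ → X, f 0 = x ∧ f (dist x y) = y ∧
      ∀ s ∈ Set.Icc (0 : ℝ) (dist x y), ∀ t ∈ Set.Icc (0 : ℝ) (dist x y),
        dist (f s) (f t) = |s - t|)
    (E : Set X) (hcomp : IsCompact (frontier E))
    (δ : ℝ) (hδ : 0 < δ) (C₀ ε₀ : ℝ) (hC₀ : 0 < C₀) (hε₀ : 0 < ε₀)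
    (hnb : ∀ ε : ℝ, 0 < ε → ε ≤ ε₀ →
      μ {x | Metric.infDist x (frontier E) < ε} ≤ ENNReal.ofReal (C₀ * ε ^ δ)) :
    ∃ c₇ : ℝ, 0 < c₇ ∧ ∀ ε : ℝ, 0 < ε →
      (μ.prod μ) {xy : X × X | xy.1 ∉ E ∧ xy.2 ∈ E ∧ dist xy.1 xy.2 < ε} ≤
        ENNReal.ofReal (c₇ * (ε ^ (dH + δ) + ε ^ (2 * dH))) := by
  have hA' : ∀ (x : X) (r : ℝ), 0 < r →
      ENNReal.ofReal (c₁ * r ^ dH) ≤ μ (Metric.ball x r) ∧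
        μ (Metric.ball x r) ≤ ENNReal.ofReal (c₂ * r ^ dH) := hA
  haveI : SecondCountableTopology X := second_countable_of_ahlfors μ dH c₁ c₂ hc₁ hc₂ hA'
  set F := frontier E with hF
  -- finite cover of the frontier by balls of radius ε₀
  obtain ⟨b, hbF, hbfin, hbcov⟩ := hcomp.elim_finite_subcover_image
    (fun z (_ : z ∈ F) => isOpen_ball (x := z) (ε := ε₀))
    (fun z hz => Set.mem_biUnion hz (mem_ball_self hε₀))
  obtain ⟨N, hN⟩ : ∃ N : ℕ, hbfin.toFinset.card = N := ⟨_, rfl⟩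
  refine ⟨c₂ * C₀ + (N + 1) * c₂ ^ 2 * 2 ^ dH, by positivity, ?_⟩
  intro ε hε
  set T : Set X := ⋃ z ∈ F, ball z ε with hT
  have hTopen : IsOpen T := isOpen_biUnion fun z _ => isOpen_ball
  set B : Set (X × X) := {xy | xy.1 ∈ T ∧ dist xy.1 xy.2 < ε} with hB
  have hBopen : IsOpen B :=
    (hTopen.preimage continuous_fst).inter (isOpen_lt continuous_dist continuous_const)
  have hAB : {xy : X × X | xy.1 ∉ E ∧ xy.2 ∈ E ∧ dist xy.1 xy.2 < ε} ⊆ B := by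
    rintro ⟨x, y⟩ ⟨hx, hy, hd⟩
    obtain ⟨z, hz, hdz⟩ := geodesic_frontier hgeo hx hy
    exact ⟨Set.mem_biUnion hz (by simpa [mem_ball, dist_comm] using hdz.trans_lt hd), hd⟩
  have key : (μ.prod μ) B ≤ μ T * ENNReal.ofReal (c₂ * ε ^ dH) := by
    rw [Measure.prod_apply hBopen.measurableSet]
    have hpt : ∀ x : X, μ (Prod.mk x ⁻¹' B) ≤
        T.indicator (fun _ => ENNReal.ofReal (c₂ * ε ^ dH)) x := by
      intro x
      by_cases hx : x ∈ T
      · have : Prod.mk x ⁻¹' B = ball x ε := by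
          ext y; simp [hB, hx, mem_ball, dist_comm]
        rw [this, Set.indicator_of_mem hx]
        exact (hA' x ε hε).2
      · have : Prod.mk x ⁻¹' B = ∅ := by
          ext y; simp [hB, hx]
        simp [this]
    calc ∫⁻ x, μ (Prod.mk x ⁻¹' B) ∂μ
        ≤ ∫⁻ x, T.indicator (fun _ => ENNReal.ofReal (c₂ * ε ^ dH)) x ∂μ :=
          lintegral_mono hpt
      _ = μ T * ENNReal.ofReal (c₂ * ε ^ dH) := by
          rw [lintegral_indicator hTopen.measurableSet, setLIntegral_const, mul_comm]
  refine le_trans (measure_mono hAB) (le_trans key ?_)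
  rcases le_or_gt ε ε₀ with hle | hgt
  · -- small ε: use the neighborhood hypothesis
    have hTsub : T ⊆ {x | Metric.infDist x F < ε} := by
      intro x hx
      obtain ⟨z, hz, hxz⟩ := Set.mem_iUnion₂.mp hx
      exact lt_of_le_of_lt (infDist_le_dist_of_mem hz) (mem_ball.mp hxz)
    have h1 : μ T ≤ ENNReal.ofReal (C₀ * ε ^ δ) :=
      le_trans (measure_mono hTsub) (hnb ε hε hle)
    calc μ T * ENNReal.ofReal (c₂ * ε ^ dH)
        ≤ ENNReal.ofReal (C₀ * ε ^ δ) * ENNReal.ofReal (c₂ * ε ^ dH) :=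
          mul_le_mul_left h1 _
      _ = ENNReal.ofReal (C₀ * ε ^ δ * (c₂ * ε ^ dH)) :=
          (ENNReal.ofReal_mul (by positivity)).symm
      _ ≤ ENNReal.ofReal ((c₂ * C₀ + (N + 1) * c₂ ^ 2 * 2 ^ dH) *
            (ε ^ (dH + δ) + ε ^ (2 * dH))) := by
          apply ENNReal.ofReal_le_ofReal
          have h2 : C₀ * ε ^ δ * (c₂ * ε ^ dH) = c₂ * C₀ * ε ^ (dH + δ) := by
            rw [Real.rpow_add hε]; ring
          have h3 : (0:ℝ) ≤ ε ^ (dH + δ) := by positivity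
          have h4 : (0:ℝ) ≤ ε ^ (2 * dH) := by positivity
          have h5 : (0:ℝ) ≤ (N + 1 : ℝ) * c₂ ^ 2 * 2 ^ dH := by positivity
          have h6 : (0:ℝ) ≤ c₂ * C₀ := by positivity
          rw [h2]; nlinarith [mul_nonneg h5 h3, mul_nonneg h5 h4, mul_nonneg h6 h4]
  · -- large ε: use the finite cover
    have hTsub : T ⊆ ⋃ z ∈ hbfin.toFinset, ball z (2 * ε) := by
      intro x hx
      obtain ⟨w, hw, hxw⟩ := Set.mem_iUnion₂.mp hx
      obtain ⟨z, hz, hwz⟩ := Set.mem_iUnion₂.mp (hbcov hw)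
      refine Set.mem_biUnion (hbfin.mem_toFinset.mpr hz) ?_
      rw [mem_ball] at *
      calc dist x z ≤ dist x w + dist w z := dist_triangle _ _ _
        _ < ε + ε₀ := add_lt_add hxw hwz
        _ < 2 * ε := by linarith
    have h2ε : (0:ℝ) < 2 * ε := by linarith
    have h1 : μ T ≤ (N : ℝ≥0∞) * ENNReal.ofReal (c₂ * (2 * ε) ^ dH) := by
      refine le_trans (measure_mono hTsub) (le_trans (measure_biUnion_finset_le _ _) ?_)
      calc ∑ z ∈ hbfin.toFinset, μ (ball z (2 * ε))
          ≤ ∑ _z ∈ hbfin.toFinset, ENNReal.ofReal (c₂ * (2 * ε) ^ dH) :=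
            Finset.sum_le_sum fun z _ => (hA' z (2 * ε) h2ε).2
        _ = (N : ℝ≥0∞) * ENNReal.ofReal (c₂ * (2 * ε) ^ dH) := by
            rw [Finset.sum_const, nsmul_eq_mul, hN]
    calc μ T * ENNReal.ofReal (c₂ * ε ^ dH)
        ≤ (N : ℝ≥0∞) * ENNReal.ofReal (c₂ * (2 * ε) ^ dH) * ENNReal.ofReal (c₂ * ε ^ dH) :=
          mul_le_mul_left h1 _
      _ = ENNReal.ofReal ((N : ℝ) * (c₂ * (2 * ε) ^ dH) * (c₂ * ε ^ dH)) := by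
          rw [← ENNReal.ofReal_natCast N, ← ENNReal.ofReal_mul (by positivity),
            ← ENNReal.ofReal_mul (by positivity)]
      _ ≤ ENNReal.ofReal ((c₂ * C₀ + (N + 1) * c₂ ^ 2 * 2 ^ dH) *
            (ε ^ (dH + δ) + ε ^ (2 * dH))) := by
          apply ENNReal.ofReal_le_ofReal
          have h2 : (2 * ε) ^ dH = 2 ^ dH * ε ^ dH :=
            Real.mul_rpow (by norm_num) hε.le
          have h3 : ε ^ dH * ε ^ dH = ε ^ (2 * dH) := by
            rw [← Real.rpow_add hε]; ring_nf
          have h4 : (0:ℝ) ≤ ε ^ (dH + δ) := by positivity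
          have h5 : (0:ℝ) ≤ ε ^ (2 * dH) := by positivity
          have h6 : (0:ℝ) ≤ c₂ * C₀ := by positivity
          have h7 : (0:ℝ) < 2 ^ dH := by positivity
          have h8 : (0:ℝ) ≤ (N:ℝ) := Nat.cast_nonneg N
          have heq : (N : ℝ) * (c₂ * (2 * ε) ^ dH) * (c₂ * ε ^ dH)
              = (N:ℝ) * c₂ ^ 2 * 2 ^ dH * ε ^ (2 * dH) := by
            rw [h2, ← h3]; ring
          have h9 : (0:ℝ) ≤ c₂ ^ 2 * 2 ^ dH := by positivity
          rw [heq]; nlinarith [mul_nonneg h9 h4, mul_nonneg h9 h5, mul_nonneg h6 h4,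
            mul_nonneg h6 h5, mul_nonneg (mul_nonneg h8 h9) h5]


end BesovDirichlet
end
end
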